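/- arXiv:2305.17363 — 4 statements merged into one kernel-verified Lean document; each statement's English description precedes it below -/
import Mathlib

section
/- Fix β > 0 and set λ = 0. Then the system F(c, r, u, v, β, 0) = 0 has exactly one solution (c, r, u, v) ∈ ℝ × ℝ × M × M, namely c = c₀ = ∑_{j=1}^n a_j, r = r_{0β} = β(∑_{j=1}^n b_jξ_j)/((∑_{j=1}^n a_j)(∑_{j=1}^n ξ_j²η_j)), u = 0 and v = 0. -/
open Finset Set

/-- A real square matrix is essentially nonnegative if all off-diagonal entries
are nonnegative. -/
def EssNonneg {n : ℕ} (P : Matrix (Fin n) (Fin n) ℝ) : Prop :=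
  ∀ j k, j ≠ k → 0 ≤ P j k

/-- Zero column sums. -/
def ZeroColSums {n : ℕ} (P : Matrix (Fin n) (Fin n) ℝ) : Prop :=
  ∀ k, ∑ j, P j k = 0

/-- Irreducibility of a matrix. -/
def MatIrred {n : ℕ} (P : Matrix (Fin n) (Fin n) ℝ) : Prop :=
  ∀ S : Finset (Fin n), S.Nonempty → S ≠ Finset.univ →
    ∃ j, j ∉ S ∧ ∃ k ∈ S, P j k ≠ 0

/-- Componentwise positivity of a vector. -/
def PosVec {n : ℕ} (x : Fin n → ℝ) : Prop := ∀ j, 0 < x j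

/-- The equilibrium system (E). -/
def IsEquilib {n : ℕ} (P Q : Matrix (Fin n) (Fin n) ℝ) (a b : Fin n → ℝ)
    (θ lam β : ℝ) (x y : Fin n → ℝ) : Prop :=
  ∀ j, (∑ k, P j k * x k) + lam * (a j - (β * b j + 1) * x j + (x j) ^ 2 * y j) = 0 ∧
    θ * (∑ k, Q j k * y k) + lam * (β * b j * x j - (x j) ^ 2 * y j) = 0

/-- The linearization matrix `A_β(λ)` (as a complex `2n × 2n` matrix in block form). -/
noncomputable def Amat {n : ℕ} (P Q : Matrix (Fin n) (Fin n) ℝ) (b : Fin n → ℝ)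
    (θ lam β : ℝ) (x y : Fin n → ℝ) :
    Matrix (Fin n ⊕ Fin n) (Fin n ⊕ Fin n) ℂ :=
  Matrix.fromBlocks (P.map fun t => (t : ℂ)) 0 0 ((θ : ℂ) • Q.map fun t => (t : ℂ))
    + (lam : ℂ) • Matrix.fromBlocks
        (Matrix.diagonal fun j => ((2 * x j * y j - β * b j - 1 : ℝ) : ℂ))
        (Matrix.diagonal fun j => (((x j) ^ 2 : ℝ) : ℂ))
        (Matrix.diagonal fun j => ((β * b j - 2 * x j * y j : ℝ) : ℂ))
        (-(Matrix.diagonal fun j => (((x j) ^ 2 : ℝ) : ℂ)))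

/-- `μ` is an eigenvalue of the complex matrix `A`. -/
def IsEig {m : Type*} [Fintype m] (A : Matrix m m ℂ) (μ : ℂ) : Prop :=
  ∃ v, v ≠ 0 ∧ A.mulVec v = μ • v

/-- Component `f₁` of the map `F`. -/
def F1 {n : ℕ} (a b ξ η : Fin n → ℝ) (c r β : ℝ) (u v : Fin n → ℝ) : ℝ :=
  ∑ j, (a j - (β * b j + 1) * (c * ξ j + u j)
    + (c * ξ j + u j) ^ 2 * (r * η j + v j))

/-- Component `f_{2j}` of the map `F`. -/
noncomputable def F2 {n : ℕ} (P : Matrix (Fin n) (Fin n) ℝ) (a b ξ η : Fin n → ℝ)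
    (c r β lam : ℝ) (u v : Fin n → ℝ) (j : Fin n) : ℝ :=
  lam * (a j - (β * b j + 1) * (c * ξ j + u j)
      + (c * ξ j + u j) ^ 2 * (r * η j + v j))
    + (∑ k, P j k * u k) - lam / n * F1 a b ξ η c r β u v

/-- Component `f₃` of the map `F`. -/
def F3 {n : ℕ} (b ξ η : Fin n → ℝ) (c r β : ℝ) (u v : Fin n → ℝ) : ℝ :=
  ∑ j, (β * b j * (c * ξ j + u j) - (c * ξ j + u j) ^ 2 * (r * η j + v j))

/-- Component `f_{4j}` of the map `F`. -/
noncomputable def F4 {n : ℕ} (Q : Matrix (Fin n) (Fin n) ℝ) (b ξ η : Fin n → ℝ)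
    (θ c r β lam : ℝ) (u v : Fin n → ℝ) (j : Fin n) : ℝ :=
  lam * (β * b j * (c * ξ j + u j) - (c * ξ j + u j) ^ 2 * (r * η j + v j))
    + θ * (∑ k, Q j k * v k) - lam / n * F3 b ξ η c r β u v


lemma ker_zero {n : ℕ} (hn : 0 < n) (P : Matrix (Fin n) (Fin n) ℝ) (ξ : Fin n → ℝ)
    (hirr : MatIrred P) (hess : EssNonneg P) (hξpos : PosVec ξ)
    (hPξ : P.mulVec ξ = 0) (hξsum : ∑ j, ξ j = 1)
    (u : Fin n → ℝ) (hu : ∀ j, ∑ k, P j k * u k = 0) (hsum : ∑ j, u j = 0) :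
    u = 0 := by
  haveI : NeZero n := ⟨hn.ne'⟩
  obtain ⟨j₀, -, hj₀⟩ := Finset.exists_max_image (Finset.univ : Finset (Fin n))
      (fun j => u j / ξ j) ⟨0, Finset.mem_univ 0⟩
  set t := u j₀ / ξ j₀ with ht
  set w : Fin n → ℝ := fun j => u j - t * ξ j with hw
  have hPξ' : ∀ j, ∑ k, P j k * ξ k = 0 := by
    intro j
    have := congrFun hPξ j
    simpa [Matrix.mulVec, dotProduct] using this
  have hPw : ∀ j, ∑ k, P j k * w k = 0 := by
    intro j
    have : ∑ k, P j k * w k = (∑ k, P j k * u k) - t * (∑ k, P j k * ξ k) := by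
      rw [Finset.mul_sum, ← Finset.sum_sub_distrib]
      exact Finset.sum_congr rfl fun k _ => by simp [hw]; ring
    rw [this, hu j, hPξ' j]; ring
  have hwle : ∀ j, w j ≤ 0 := by
    intro j
    have h1 : u j / ξ j ≤ t := hj₀ j (Finset.mem_univ j)
    have h2 : u j ≤ t * ξ j := (div_le_iff₀ (hξpos j)).mp h1
    simp [hw]; linarith
  have hwj₀ : w j₀ = 0 := by
    have hx : ξ j₀ ≠ 0 := (hξpos j₀).ne'
    simp only [hw, ht]
    field_simp
    ring
  have hwall : ∀ j, w j = 0 := by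
    by_contra hcon
    push_neg at hcon
    obtain ⟨m, hm⟩ := hcon
    set T : Finset (Fin n) := Finset.univ.filter (fun j => w j ≠ 0) with hT
    have hTne : T.Nonempty := ⟨m, by simp [hT, hm]⟩
    have hTneq : T ≠ Finset.univ := by
      intro h
      have : j₀ ∈ T := h ▸ Finset.mem_univ j₀
      simp [hT, hwj₀] at this
    obtain ⟨j, hjT, k, hkT, hPjk⟩ := hirr T hTne hTneq
    have hwk : w k ≠ 0 := (Finset.mem_filter.mp hkT).2
    have hterms : ∀ m ∈ Finset.univ, P j m * w m ≤ 0 := by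
      intro m _
      by_cases hmj : m = j
      · have : w j = 0 := by
          by_contra h
          exact hjT (Finset.mem_filter.mpr ⟨Finset.mem_univ j, h⟩)
        rw [hmj, this]; simp
      · exact mul_nonpos_of_nonneg_of_nonpos (hess j m (Ne.symm hmj)) (hwle m)
    have := (Finset.sum_eq_zero_iff_of_nonpos hterms).mp (hPw j) k (Finset.mem_univ k)
    rcases mul_eq_zero.mp this with h | h
    · exact hPjk h
    · exact hwk h
  have htz : t = 0 := by
    have : ∑ j, u j = t * ∑ j, ξ j := by
      rw [Finset.mul_sum]
      exact Finset.sum_congr rfl fun j _ => by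
        have := hwall j; simp [hw] at this; linarith
    rw [hsum, hξsum] at this
    linarith
  funext j
  have := hwall j
  simp [hw, htz] at this
  simpa using this

/-- For fixed `β > 0` and `λ = 0`, the system `F(c,r,u,v,β,0) = 0` with
`u, v ∈ M` has exactly one solution, namely
`c = c₀ = ∑ aⱼ`, `r = r_{0β}`, `u = 0`, `v = 0`. -/
theorem stmt_0 (n : ℕ) (hn : 2 ≤ n)
    (P Q : Matrix (Fin n) (Fin n) ℝ) (a b ξ η : Fin n → ℝ) (θ : ℝ)
    (ha : ∀ j, 0 < a j) (hb : ∀ j, 0 < b j) (hθ : 0 < θ)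
    (hPirr : MatIrred P) (hQirr : MatIrred Q)
    (hPess : EssNonneg P) (hQess : EssNonneg Q)
    (hPcol : ZeroColSums P) (hQcol : ZeroColSums Q)
    (hξpos : PosVec ξ) (hηpos : PosVec η)
    (hPξ : P.mulVec ξ = 0) (hQη : Q.mulVec η = 0)
    (hξsum : ∑ j, ξ j = 1) (hηsum : ∑ j, η j = 1)
    (β : ℝ) (hβ : 0 < β) :
    ∀ (c r : ℝ) (u v : Fin n → ℝ),
      ((∑ j, u j = 0) ∧ (∑ j, v j = 0) ∧
        F1 a b ξ η c r β u v = 0 ∧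
        (∀ j, F2 P a b ξ η c r β 0 u v j = 0) ∧
        F3 b ξ η c r β u v = 0 ∧
        (∀ j, F4 Q b ξ η θ c r β 0 u v j = 0)) ↔
      (c = ∑ j, a j ∧
        r = β * (∑ j, b j * ξ j) / ((∑ j, a j) * (∑ j, (ξ j) ^ 2 * η j)) ∧
        u = 0 ∧ v = 0) := by
  intro c r u v
  have hnn : (0:ℕ) < n := lt_of_lt_of_le (by norm_num) hn
  haveI : NeZero n := ⟨hnn.ne'⟩
  have hA : 0 < ∑ j, a j := Finset.sum_pos (fun j _ => ha j) ⟨0, Finset.mem_univ 0⟩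
  have hE : 0 < ∑ j, (ξ j) ^ 2 * η j :=
    Finset.sum_pos (fun j _ => mul_pos (pow_pos (hξpos j) 2) (hηpos j)) ⟨0, Finset.mem_univ 0⟩
  have eF1 : ∀ c' r' : ℝ, F1 a b ξ η c' r' β 0 0 =
      (∑ j, a j) - β * c' * (∑ j, b j * ξ j) - c' * (∑ j, ξ j)
        + c' ^ 2 * r' * (∑ j, (ξ j) ^ 2 * η j) := by
    intro c' r'
    unfold F1
    simp only [Pi.zero_apply, add_zero]
    rw [Finset.mul_sum, Finset.mul_sum, Finset.mul_sum, ← Finset.sum_sub_distrib,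
      ← Finset.sum_sub_distrib, ← Finset.sum_add_distrib]
    exact Finset.sum_congr rfl fun j _ => by ring
  have eF3 : ∀ c' r' : ℝ, F3 b ξ η c' r' β 0 0 =
      β * c' * (∑ j, b j * ξ j) - c' ^ 2 * r' * (∑ j, (ξ j) ^ 2 * η j) := by
    intro c' r'
    unfold F3
    simp only [Pi.zero_apply, add_zero]
    rw [Finset.mul_sum, Finset.mul_sum, ← Finset.sum_sub_distrib]
    exact Finset.sum_congr rfl fun j _ => by ring
  constructor
  · rintro ⟨hus, hvs, hF1, hF2, hF3, hF4⟩
    have hu0 : u = 0 := by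
      apply ker_zero hnn P ξ hPirr hPess hξpos hPξ hξsum u _ hus
      intro j
      have := hF2 j
      simpa [F2] using this
    have hv0 : v = 0 := by
      apply ker_zero hnn Q η hQirr hQess hηpos hQη hηsum v _ hvs
      intro j
      have := hF4 j
      simp [F4] at this
      rcases this with h | h
      · exact absurd h hθ.ne'
      · exact h
    subst hu0 hv0
    rw [eF1 c r] at hF1
    rw [eF3 c r] at hF3
    have hc : c = ∑ j, a j := by
      rw [hξsum] at hF1
      linarith
    refine ⟨hc, ?_, rfl, rfl⟩
    have hc0 : c ≠ 0 := hc ▸ hA.ne'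
    have key : β * c * (∑ j, b j * ξ j) = c ^ 2 * r * (∑ j, (ξ j) ^ 2 * η j) := by
      linarith
    rw [eq_div_iff (mul_pos hA hE).ne', ← hc]
    apply mul_left_cancel₀ hc0
    linear_combination (-1 : ℝ) * key
  · rintro ⟨hc, hr, hu, hv⟩
    subst hc hr hu hv
    have hc0 : (∑ j, a j) ≠ 0 := hA.ne'
    have hE0 : (∑ j, (ξ j) ^ 2 * η j) ≠ 0 := hE.ne'
    have h3 : F3 b ξ η (∑ j, a j)
        (β * (∑ j, b j * ξ j) / ((∑ j, a j) * (∑ j, (ξ j) ^ 2 * η j))) β 0 0 = 0 := by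
      rw [eF3]
      field_simp
      ring
    refine ⟨by simp, by simp, ?_, ?_, h3, ?_⟩
    · rw [eF1, hξsum]
      rw [eF3] at h3
      linarith
    · intro j; simp [F2]
    · intro j; simp [F4]
end

section
/- Assume in addition that ε(∑_{j=1}^n b_jξ_j) < 1 + (∑_{j=1}^n a_j)²(∑_{j=1}^n ξ_j²η_j). Then there exists λ' ∈ (0, δ_ε] such that for every λ ∈ (0, λ'], every eigenvalue of the Jacobian matrix A_ε(λ) (that is, A_β(λ) with β = ε) has strictly negative real part. -/
open Finset Set

lemma eigL {n : ℕ} (hn : 0 < n) (R : Matrix (Fin n) (Fin n) ℝ)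
    (hess : EssNonneg R) (hcol : ZeroColSums R) {μ : ℂ} {v : Fin n → ℂ}
    (hv : v ≠ 0) (heig : (R.map (fun t => (t : ℂ))).mulVec v = μ • v)
    (hre : 0 ≤ μ.re) : μ = 0 := by
  haveI : NeZero n := ⟨hn.ne'⟩
  set M : Matrix (Fin n) (Fin n) ℂ := R.map (fun t => (t : ℂ)) - μ • 1 with hM
  have hMv : M.mulVec v = 0 := by
    rw [hM, Matrix.sub_mulVec, Matrix.smul_mulVec, Matrix.one_mulVec, heig, sub_self]
  have hdet : M.det = 0 := by
    rw [← Matrix.exists_mulVec_eq_zero_iff]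
    exact ⟨v, hv, hMv⟩
  have hdetT : M.transpose.det = 0 := by rw [Matrix.det_transpose]; exact hdet
  obtain ⟨w, hw0, hw⟩ := (Matrix.exists_mulVec_eq_zero_iff).2 hdetT
  have hcoord : ∀ j, ∑ k, (R k j : ℂ) * w k = μ * w j := by
    intro j
    have h := congrFun hw j
    simp only [Matrix.mulVec, dotProduct, hM, Matrix.transpose_apply,
      Matrix.sub_apply, Matrix.map_apply, Matrix.smul_apply, Matrix.one_apply,
      sub_mul, Pi.zero_apply, smul_eq_mul, mul_ite, mul_one, mul_zero, ite_mul, zero_mul] at h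
    rw [Finset.sum_sub_distrib, Finset.sum_ite_eq' Finset.univ j (fun k => μ * w k)] at h
    simp only [Finset.mem_univ, if_true] at h
    exact sub_eq_zero.mp h
  -- pick j0 maximizing |w j|
  obtain ⟨j0, -, hj0⟩ := Finset.exists_max_image Finset.univ (fun j => ‖w j‖)
    ⟨⟨0, hn⟩, Finset.mem_univ _⟩
  have hwj0 : 0 < ‖w j0‖ := by
    by_contra hcon
    push_neg at hcon
    apply hw0
    funext k
    have hk := (hj0 k (Finset.mem_univ k)).trans hcon
    exact norm_eq_zero.mp (le_antisymm hk (norm_nonneg _))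
  have key := hcoord j0
  -- split off the diagonal term
  have hsplit : ∑ k, (R k j0 : ℂ) * w k
      = (R j0 j0 : ℂ) * w j0 + ∑ k ∈ Finset.univ.erase j0, (R k j0 : ℂ) * w k := by
    rw [← Finset.add_sum_erase _ _ (Finset.mem_univ j0)]
  have hoff : (μ - (R j0 j0 : ℂ)) * w j0 = ∑ k ∈ Finset.univ.erase j0, (R k j0 : ℂ) * w k := by
    rw [sub_mul]; rw [hsplit] at key; linear_combination -key
  have hdiag : ∑ k ∈ Finset.univ.erase j0, R k j0 = - R j0 j0 := by
    have := hcol j0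
    rw [← Finset.add_sum_erase _ _ (Finset.mem_univ j0)] at this
    linarith
  have habs : ‖μ - (R j0 j0 : ℂ)‖ * ‖w j0‖
      ≤ (- R j0 j0) * ‖w j0‖ := by
    rw [← norm_mul, hoff, ← hdiag, Finset.sum_mul]
    refine le_trans (norm_sum_le _ _) (Finset.sum_le_sum ?_)
    intro k hk
    rw [norm_mul, Complex.norm_real, Real.norm_eq_abs]
    have hk' : k ≠ j0 := Finset.ne_of_mem_erase hk
    have h1 : 0 ≤ R k j0 := hess k j0 hk'
    rw [abs_of_nonneg h1]
    exact mul_le_mul_of_nonneg_left (hj0 k (Finset.mem_univ k)) h1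
  have habs2 : ‖μ - (R j0 j0 : ℂ)‖ ≤ - R j0 j0 :=
    le_of_mul_le_mul_right (by linarith [habs]) hwj0
  have hd : R j0 j0 ≤ 0 := by
    have h1 : 0 ≤ ‖μ - (R j0 j0 : ℂ)‖ := norm_nonneg _
    linarith
  -- now conclude μ = 0
  have hsq : (μ.re - R j0 j0)^2 + μ.im^2 ≤ (R j0 j0)^2 := by
    have h1 : ‖μ - (R j0 j0 : ℂ)‖ ^ 2 ≤ (- R j0 j0)^2 := by
      apply sq_le_sq' _ habs2
      linarith [norm_nonneg (μ - (R j0 j0 : ℂ))]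
    rw [Complex.sq_norm, Complex.normSq_apply] at h1
    simp only [Complex.sub_re, Complex.sub_im, Complex.ofReal_re, Complex.ofReal_im,
      sub_zero] at h1
    nlinarith [h1]
  have hre0 : μ.re = 0 ∧ μ.im = 0 := by constructor <;> nlinarith [sq_nonneg μ.re, sq_nonneg μ.im, mul_nonneg (neg_nonneg.mpr hd) hre]
  exact Complex.ext hre0.1 hre0.2

lemma kerR {n : ℕ} (hn : 0 < n) (R : Matrix (Fin n) (Fin n) ℝ)
    (hirr : MatIrred R) (hess : EssNonneg R) {ξ : Fin n → ℝ} (hξ : PosVec ξ)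
    (hker : R.mulVec ξ = 0) {u : Fin n → ℝ} (hu : R.mulVec u = 0) :
    ∃ c : ℝ, ∀ j, u j = c * ξ j := by
  haveI : NeZero n := ⟨hn.ne'⟩
  obtain ⟨j0, -, hj0⟩ := Finset.exists_min_image Finset.univ (fun j => u j / ξ j)
    ⟨⟨0, hn⟩, Finset.mem_univ _⟩
  set t := u j0 / ξ j0 with ht
  refine ⟨t, ?_⟩
  set z : Fin n → ℝ := fun j => u j - t * ξ j with hz
  have hznn : ∀ j, 0 ≤ z j := by
    intro j
    have h1 := hj0 j (Finset.mem_univ j)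
    have h2 := hξ j
    rw [hz]
    have h3 : t * ξ j ≤ u j := by
      rw [ht]
      calc u j0 / ξ j0 * ξ j ≤ u j / ξ j * ξ j := by
            apply mul_le_mul_of_nonneg_right h1 h2.le
        _ = u j := by field_simp
    simp [h3]
  have hzj0 : z j0 = 0 := by
    have h2 := (hξ j0).ne'
    rw [hz]; simp only; rw [ht]; field_simp; ring
  have hzker : ∀ j, ∑ k, R j k * z k = 0 := by
    intro j
    have h1 := congrFun hu j
    have h2 := congrFun hker j
    simp only [Matrix.mulVec, dotProduct, Pi.zero_apply] at h1 h2
    have : ∑ k, R j k * z k = (∑ k, R j k * u k) - t * ∑ k, R j k * ξ k := by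
      rw [Finset.mul_sum, ← Finset.sum_sub_distrib]
      exact Finset.sum_congr rfl (fun k _ => by rw [hz]; ring)
    rw [this, h1, h2]; ring
  -- show z = 0
  have hzzero : ∀ j, z j = 0 := by
    by_contra hcon
    push_neg at hcon
    obtain ⟨m, hm⟩ := hcon
    set S : Finset (Fin n) := Finset.univ.filter (fun k => z k ≠ 0) with hS
    have hSne : S.Nonempty := ⟨m, by simp [hS, hm]⟩
    have hSnu : S ≠ Finset.univ := by
      intro h
      have : j0 ∈ S := h ▸ Finset.mem_univ j0
      simp [hS, hzj0] at this
    obtain ⟨j, hjS, k, hkS, hRjk⟩ := hirr S hSne hSnu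
    have hzj : z j = 0 := by
      by_contra h; exact hjS (by simp [hS, h])
    have hzk : 0 < z k := by
      have : z k ≠ 0 := by simpa [hS] using hkS
      exact lt_of_le_of_ne (hznn k) (Ne.symm this)
    have hjk : j ≠ k := by rintro rfl; exact hjS hkS
    have hpos : 0 < ∑ i, R j i * z i := by
      apply Finset.sum_pos' ?_ ⟨k, Finset.mem_univ k, ?_⟩
      · intro i _
        rcases eq_or_ne i j with rfl | hij
        · rw [hzj]; simp
        · exact mul_nonneg (hess j i (Ne.symm hij)) (hznn i)
      · exact mul_pos (lt_of_le_of_ne (hess j k hjk) (Ne.symm hRjk)) hzk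
    rw [hzker j] at hpos
    exact lt_irrefl 0 hpos
  intro j
  have := hzzero j
  rw [hz] at this
  simp only at this
  linarith

lemma kerC {n : ℕ} (hn : 0 < n) (R : Matrix (Fin n) (Fin n) ℝ)
    (hirr : MatIrred R) (hess : EssNonneg R) {ξ : Fin n → ℝ} (hξ : PosVec ξ)
    (hker : R.mulVec ξ = 0) {v : Fin n → ℂ}
    (hv : ∀ j, ∑ k, (R j k : ℂ) * v k = 0) :
    ∃ c : ℂ, ∀ j, v j = c * (ξ j : ℂ) := by
  have hre : R.mulVec (fun k => (v k).re) = 0 := by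
    funext j
    have := congrArg Complex.re (hv j)
    simpa [Matrix.mulVec, dotProduct, Complex.re_sum, Complex.mul_re] using this
  have him : R.mulVec (fun k => (v k).im) = 0 := by
    funext j
    have := congrArg Complex.im (hv j)
    simpa [Matrix.mulVec, dotProduct, Complex.im_sum, Complex.mul_im] using this
  obtain ⟨cr, hcr⟩ := kerR hn R hirr hess hξ hker hre
  obtain ⟨ci, hci⟩ := kerR hn R hirr hess hξ hker him
  refine ⟨⟨cr, ci⟩, fun j => ?_⟩
  have h1 := hcr j
  have h2 := hci j
  apply Complex.ext <;> simp [Complex.mul_re, Complex.mul_im, h1, h2]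


lemma Amat_inl {n : ℕ} (P Q : Matrix (Fin n) (Fin n) ℝ) (b : Fin n → ℝ)
    (θ lam β : ℝ) (x y : Fin n → ℝ) (v : Fin n ⊕ Fin n → ℂ) (j : Fin n) :
    (Amat P Q b θ lam β x y).mulVec v (Sum.inl j)
      = (∑ k, (P j k : ℂ) * v (Sum.inl k))
        + (lam : ℂ) * (((2 * x j * y j - β * b j - 1 : ℝ) : ℂ) * v (Sum.inl j)
          + (((x j) ^ 2 : ℝ) : ℂ) * v (Sum.inr j)) := by
  simp only [Amat, Matrix.mulVec, dotProduct, Fintype.sum_sum_type,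
    Matrix.add_apply, Matrix.smul_apply, Matrix.fromBlocks_apply₁₁,
    Matrix.fromBlocks_apply₁₂, Matrix.map_apply, Matrix.zero_apply,
    Matrix.diagonal_apply, smul_eq_mul, zero_add, add_mul, mul_ite, ite_mul,
    mul_zero, zero_mul, mul_assoc]
  rw [Finset.sum_add_distrib, Finset.sum_ite_eq, Finset.sum_ite_eq]
  simp only [Finset.mem_univ, if_true]
  ring

lemma Amat_inr {n : ℕ} (P Q : Matrix (Fin n) (Fin n) ℝ) (b : Fin n → ℝ)
    (θ lam β : ℝ) (x y : Fin n → ℝ) (v : Fin n ⊕ Fin n → ℂ) (j : Fin n) :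
    (Amat P Q b θ lam β x y).mulVec v (Sum.inr j)
      = (θ : ℂ) * (∑ k, (Q j k : ℂ) * v (Sum.inr k))
        + (lam : ℂ) * (((β * b j - 2 * x j * y j : ℝ) : ℂ) * v (Sum.inl j)
          - (((x j) ^ 2 : ℝ) : ℂ) * v (Sum.inr j)) := by
  simp only [Amat, Matrix.mulVec, dotProduct, Fintype.sum_sum_type,
    Matrix.add_apply, Matrix.smul_apply, Matrix.fromBlocks_apply₂₁,
    Matrix.fromBlocks_apply₂₂, Matrix.map_apply, Matrix.zero_apply,
    Matrix.neg_apply, Matrix.diagonal_apply, smul_eq_mul, add_zero, zero_add,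
    add_mul, mul_ite, ite_mul, mul_zero, zero_mul, neg_mul, mul_neg, neg_zero, mul_assoc]
  rw [Finset.sum_add_distrib, Finset.sum_ite_eq]
  rw [show (∑ x_1 : Fin n, -if j = x_1 then (lam:ℂ) * ((((x j)^2:ℝ):ℂ) * v (Sum.inr x_1)) else 0)
      = -∑ x_1 : Fin n, if j = x_1 then (lam:ℂ) * ((((x j)^2:ℝ):ℂ) * v (Sum.inr x_1)) else 0
    from by rw [← Finset.sum_neg_distrib], Finset.sum_ite_eq]
  simp only [Finset.mem_univ, if_true, Finset.mul_sum]
  ring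


set_option maxHeartbeats 2000000 in
/-- If `ε (∑ bⱼξⱼ) < 1 + (∑ aⱼ)² (∑ ξⱼ²ηⱼ)`, then for all sufficiently small
`λ > 0` every eigenvalue of `A_ε(λ)` has strictly negative real part. -/
theorem stmt_4 (n : ℕ) (hn : 2 ≤ n)
    (P Q : Matrix (Fin n) (Fin n) ℝ) (a b ξ η : Fin n → ℝ) (θ : ℝ)
    (ha : ∀ j, 0 < a j) (hb : ∀ j, 0 < b j) (hθ : 0 < θ)
    (hPirr : MatIrred P) (hQirr : MatIrred Q)
    (hPess : EssNonneg P) (hQess : EssNonneg Q)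
    (hPcol : ZeroColSums P) (hQcol : ZeroColSums Q)
    (hξpos : PosVec ξ) (hηpos : PosVec η)
    (hPξ : P.mulVec ξ = 0) (hQη : Q.mulVec η = 0)
    (hξsum : ∑ j, ξ j = 1) (hηsum : ∑ j, η j = 1)
    (ε : ℝ) (hε : ε ∈ Set.Ioo (0 : ℝ) 1)
    -- the globally defined equilibrium family on `[0, δε] × B`
    (δε : ℝ) (hδε : 0 < δε)
    (xy : ℝ → ℝ → (Fin n → ℝ) × (Fin n → ℝ))
    (hxyC1 : ContDiffOn ℝ 1 (fun p : ℝ × ℝ => xy p.1 p.2)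
      (Set.Icc 0 δε ×ˢ Set.Icc ε (1 / ε)))
    (hxy : ∀ lam ∈ Set.Ioc 0 δε, ∀ β ∈ Set.Icc ε (1 / ε),
      PosVec (xy lam β).1 ∧ PosVec (xy lam β).2 ∧
      IsEquilib P Q a b θ lam β (xy lam β).1 (xy lam β).2 ∧
      (∀ x y : Fin n → ℝ, PosVec x → PosVec y →
        IsEquilib P Q a b θ lam β x y → (x, y) = xy lam β))
    (hxy0 : ∀ β ∈ Set.Icc ε (1 / ε),
      xy 0 β = ((fun j => (∑ i, a i) * ξ j),
        (fun j => β * (∑ i, b i * ξ i) /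
          ((∑ i, a i) * (∑ i, (ξ i) ^ 2 * η i)) * η j)))
    -- the smallness condition on `ε`
    (hsmall : ε * (∑ j, b j * ξ j) < 1 + (∑ j, a j) ^ 2 * (∑ j, (ξ j) ^ 2 * η j)) :
    ∃ lam' ∈ Set.Ioc 0 δε, ∀ lam ∈ Set.Ioc 0 lam', ∀ μ : ℂ,
      IsEig (Amat P Q b θ lam ε (xy lam ε).1 (xy lam ε).2) μ → μ.re < 0 := by
  have hn0 : 0 < n := by omega
  haveI : NeZero n := ⟨hn0.ne'⟩
  have hne : (Finset.univ : Finset (Fin n)).Nonempty := ⟨⟨0, hn0⟩, Finset.mem_univ _⟩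
  obtain ⟨hε0, hε1⟩ := hε
  set c0 : ℝ := ∑ j, a j with hc0def
  set Bb : ℝ := ∑ j, b j * ξ j with hBbdef
  set S : ℝ := ∑ j, (ξ j) ^ 2 * η j with hSdef
  have hc0 : 0 < c0 := Finset.sum_pos (fun j _ => ha j) hne
  have hBb : 0 < Bb := Finset.sum_pos (fun j _ => mul_pos (hb j) (hξpos j)) hne
  have hS : 0 < S := Finset.sum_pos (fun j _ => mul_pos (pow_pos (hξpos j) 2) (hηpos j)) hne
  set r : ℝ := ε * Bb / (c0 * S) with hrdef
  set x0 : Fin n → ℝ := fun j => c0 * ξ j with hx0def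
  set y0 : Fin n → ℝ := fun j => r * η j with hy0def
  have hεmem : ε ∈ Set.Icc ε (1 / ε) := by
    constructor
    · exact le_refl ε
    · rw [le_div_iff₀ hε0]; nlinarith
  have hxy0' : xy 0 ε = (x0, y0) := by
    rw [hxy0 ε hεmem]
  -- continuity of the equilibrium family in λ (at β = ε)
  have hcont : ContinuousOn (fun lam => xy lam ε) (Set.Icc 0 δε) := by
    have h1 : ContinuousOn (fun lam : ℝ => (lam, ε)) (Set.Icc 0 δε) :=
      (continuous_id.prodMk continuous_const).continuousOn
    exact (hxyC1.continuousOn).comp h1 (fun lam hlam => Set.mk_mem_prod hlam hεmem)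
  -- uniform bound on the equilibrium family
  obtain ⟨C0, hC0⟩ := (isCompact_Icc : IsCompact (Set.Icc (0:ℝ) δε)).exists_bound_of_continuousOn hcont
  set Rb : ℝ := |C0| + 1 with hRbdef
  have hRb : ∀ lam ∈ Set.Icc 0 δε, ∀ j, |(xy lam ε).1 j| ≤ Rb ∧ |(xy lam ε).2 j| ≤ Rb := by
    intro lam hlam j
    have h1 := hC0 lam hlam
    constructor
    · have h2 := (norm_le_pi_norm (xy lam ε).1 j).trans ((norm_fst_le (xy lam ε)).trans h1)
      rw [Real.norm_eq_abs] at h2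
      have h3 : C0 ≤ |C0| := le_abs_self C0
      rw [hRbdef]; linarith
    · have h2 := (norm_le_pi_norm (xy lam ε).2 j).trans ((norm_snd_le (xy lam ε)).trans h1)
      rw [Real.norm_eq_abs] at h2
      have h3 : C0 ≤ |C0| := le_abs_self C0
      rw [hRbdef]; linarith
  have hRb0 : 0 < Rb := by rw [hRbdef]; positivity
  -- bound on the perturbation coefficients
  set K : ℝ := 2 * Rb ^ 2 + ε * (∑ j, b j) + 1 with hKdef
  have hbK : ∀ j, ε * b j ≤ ε * ∑ i, b i := fun j =>
    mul_le_mul_of_nonneg_left (Finset.single_le_sum (fun i _ => (hb i).le) (Finset.mem_univ j)) hε0.le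
  have hK0 : 0 < K := by
    have := mul_pos hε0 (Finset.sum_pos (fun j _ => hb j) hne)
    rw [hKdef]; positivity
  have hMbound : ∀ lam ∈ Set.Icc 0 δε, ∀ j,
      |2 * (xy lam ε).1 j * (xy lam ε).2 j - ε * b j - 1| ≤ K ∧
      |((xy lam ε).1 j) ^ 2| ≤ K ∧
      |ε * b j - 2 * (xy lam ε).1 j * (xy lam ε).2 j| ≤ K := by
    intro lam hlam j
    obtain ⟨hx, hy⟩ := hRb lam hlam j
    have hbj : 0 < ε * b j := mul_pos hε0 (hb j)
    have h4 := hbK j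
    have habs : |(xy lam ε).1 j * (xy lam ε).2 j| ≤ Rb ^ 2 := by
      rw [abs_mul]
      calc |(xy lam ε).1 j| * |(xy lam ε).2 j| ≤ Rb * Rb :=
            mul_le_mul hx hy (abs_nonneg _) hRb0.le
        _ = Rb ^ 2 := by ring
    have hx2 : |((xy lam ε).1 j) ^ 2| ≤ Rb ^ 2 := by
      rw [abs_pow]
      exact pow_le_pow_left₀ (abs_nonneg _) hx 2
    obtain ⟨hm1, hm2⟩ := abs_le.mp habs
    obtain ⟨hs1, hs2⟩ := abs_le.mp hx2
    refine ⟨?_, ?_, ?_⟩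
    · rw [hKdef]; rw [abs_le]; constructor <;> linarith
    · rw [hKdef]; rw [abs_le]; constructor <;> linarith
    · rw [hKdef]; rw [abs_le]; constructor <;> linarith
  -- uniform bound on the matrix action
  set CA : ℝ := (∑ j, ∑ k, |P j k|) + θ * (∑ j, ∑ k, |Q j k|) + δε * (2 * K) + 1 with hCAdef
  have hCA0 : 0 < CA := by
    have h1 : (0:ℝ) ≤ ∑ j, ∑ k, |P j k| :=
      Finset.sum_nonneg (fun j _ => Finset.sum_nonneg (fun k _ => abs_nonneg _))
    have h2 : (0:ℝ) ≤ ∑ j, ∑ k, |Q j k| :=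
      Finset.sum_nonneg (fun j _ => Finset.sum_nonneg (fun k _ => abs_nonneg _))
    have h3 : 0 ≤ θ * (∑ j, ∑ k, |Q j k|) := mul_nonneg hθ.le h2
    have h4 : 0 < δε * (2 * K) := by positivity
    rw [hCAdef]; linarith
  have hAct : ∀ lam ∈ Set.Ioc 0 δε, ∀ v : (Fin n ⊕ Fin n) → ℂ, ‖v‖ ≤ 1 →
      ‖(Amat P Q b θ lam ε (xy lam ε).1 (xy lam ε).2).mulVec v‖ ≤ CA := by
    intro lam hlam v hv
    have hlam' : lam ∈ Set.Icc 0 δε := ⟨hlam.1.le, hlam.2⟩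
    have hvk : ∀ i, ‖v i‖ ≤ 1 := fun i => (norm_le_pi_norm v i).trans hv
    apply (pi_norm_le_iff_of_nonneg hCA0.le).2
    intro i
    have hQ0 : (0:ℝ) ≤ θ * (∑ j, ∑ k, |Q j k|) :=
      mul_nonneg hθ.le (Finset.sum_nonneg (fun j _ => Finset.sum_nonneg (fun k _ => abs_nonneg _)))
    have hP0 : (0:ℝ) ≤ ∑ j, ∑ k, |P j k| :=
      Finset.sum_nonneg (fun j _ => Finset.sum_nonneg (fun k _ => abs_nonneg _))
    cases i with
    | inl j =>
      rw [Amat_inl]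
      obtain ⟨hm1, hm2, hm3⟩ := hMbound lam hlam' j
      have t1 : ‖∑ k, (P j k : ℂ) * v (Sum.inl k)‖ ≤ ∑ k, |P j k| := by
        refine (norm_sum_le _ _).trans (Finset.sum_le_sum (fun k _ => ?_))
        rw [norm_mul, Complex.norm_real, Real.norm_eq_abs]
        calc |P j k| * ‖v (Sum.inl k)‖ ≤ |P j k| * 1 :=
              mul_le_mul_of_nonneg_left (hvk _) (abs_nonneg _)
          _ = |P j k| := mul_one _
      have t2 : ‖((2 * (xy lam ε).1 j * (xy lam ε).2 j - ε * b j - 1 : ℝ) : ℂ) * v (Sum.inl j)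
          + ((((xy lam ε).1 j) ^ 2 : ℝ) : ℂ) * v (Sum.inr j)‖ ≤ 2 * K := by
        refine (norm_add_le _ _).trans ?_
        rw [norm_mul, norm_mul, Complex.norm_real, Real.norm_eq_abs, Complex.norm_real, Real.norm_eq_abs]
        have u1 : |2 * (xy lam ε).1 j * (xy lam ε).2 j - ε * b j - 1| * ‖v (Sum.inl j)‖ ≤ K := by
          calc _ ≤ K * 1 := mul_le_mul hm1 (hvk _) (norm_nonneg _) hK0.le
            _ = K := mul_one _
        have u2 : |((xy lam ε).1 j) ^ 2| * ‖v (Sum.inr j)‖ ≤ K := by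
          calc _ ≤ K * 1 := mul_le_mul hm2 (hvk _) (norm_nonneg _) hK0.le
            _ = K := mul_one _
        linarith
      calc ‖(∑ k, (P j k : ℂ) * v (Sum.inl k)) + (lam : ℂ) *
              (((2 * (xy lam ε).1 j * (xy lam ε).2 j - ε * b j - 1 : ℝ) : ℂ) * v (Sum.inl j)
                + ((((xy lam ε).1 j) ^ 2 : ℝ) : ℂ) * v (Sum.inr j))‖
          ≤ (∑ k, |P j k|) + lam * (2 * K) := by
            refine (norm_add_le _ _).trans ?_
            rw [norm_mul, Complex.norm_real, Real.norm_eq_abs, abs_of_pos hlam.1]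
            exact add_le_add t1 (mul_le_mul_of_nonneg_left t2 hlam.1.le)
        _ ≤ CA := by
            have h5 : (∑ k, |P j k|) ≤ ∑ j, ∑ k, |P j k| :=
              Finset.single_le_sum (f := fun j => ∑ k, |P j k|) (fun i _ => Finset.sum_nonneg (fun k _ => abs_nonneg _))
                (Finset.mem_univ j)
            have h6 : lam * (2 * K) ≤ δε * (2 * K) := by
              apply mul_le_mul_of_nonneg_right hlam.2; positivity
            rw [hCAdef]; linarith
    | inr j =>
      rw [Amat_inr]
      obtain ⟨hm1, hm2, hm3⟩ := hMbound lam hlam' j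
      have t1 : ‖(θ:ℂ) * ∑ k, (Q j k : ℂ) * v (Sum.inr k)‖ ≤ θ * ∑ k, |Q j k| := by
        rw [norm_mul, Complex.norm_real, Real.norm_eq_abs, abs_of_pos hθ]
        refine mul_le_mul_of_nonneg_left ?_ hθ.le
        refine (norm_sum_le _ _).trans (Finset.sum_le_sum (fun k _ => ?_))
        rw [norm_mul, Complex.norm_real, Real.norm_eq_abs]
        calc |Q j k| * ‖v (Sum.inr k)‖ ≤ |Q j k| * 1 :=
              mul_le_mul_of_nonneg_left (hvk _) (abs_nonneg _)
          _ = |Q j k| := mul_one _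
      have t2 : ‖((ε * b j - 2 * (xy lam ε).1 j * (xy lam ε).2 j : ℝ) : ℂ) * v (Sum.inl j)
          - ((((xy lam ε).1 j) ^ 2 : ℝ) : ℂ) * v (Sum.inr j)‖ ≤ 2 * K := by
        refine (norm_sub_le _ _).trans ?_
        rw [norm_mul, norm_mul, Complex.norm_real, Real.norm_eq_abs, Complex.norm_real, Real.norm_eq_abs]
        have u1 : |ε * b j - 2 * (xy lam ε).1 j * (xy lam ε).2 j| * ‖v (Sum.inl j)‖ ≤ K := by
          calc _ ≤ K * 1 := mul_le_mul hm3 (hvk _) (norm_nonneg _) hK0.le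
            _ = K := mul_one _
        have u2 : |((xy lam ε).1 j) ^ 2| * ‖v (Sum.inr j)‖ ≤ K := by
          calc _ ≤ K * 1 := mul_le_mul hm2 (hvk _) (norm_nonneg _) hK0.le
            _ = K := mul_one _
        linarith
      calc ‖(θ:ℂ) * (∑ k, (Q j k : ℂ) * v (Sum.inr k)) + (lam : ℂ) *
              (((ε * b j - 2 * (xy lam ε).1 j * (xy lam ε).2 j : ℝ) : ℂ) * v (Sum.inl j)
                - ((((xy lam ε).1 j) ^ 2 : ℝ) : ℂ) * v (Sum.inr j))‖
          ≤ θ * (∑ k, |Q j k|) + lam * (2 * K) := by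
            refine (norm_add_le _ _).trans ?_
            rw [norm_mul (((lam:ℝ)):ℂ), Complex.norm_real, Real.norm_eq_abs, abs_of_pos hlam.1]
            exact add_le_add t1 (mul_le_mul_of_nonneg_left t2 hlam.1.le)
        _ ≤ CA := by
            have h5 : (∑ k, |Q j k|) ≤ ∑ j, ∑ k, |Q j k| :=
              Finset.single_le_sum (f := fun j => ∑ k, |Q j k|) (fun i _ => Finset.sum_nonneg (fun k _ => abs_nonneg _))
                (Finset.mem_univ j)
            have h6 : lam * (2 * K) ≤ δε * (2 * K) := by
              apply mul_le_mul_of_nonneg_right hlam.2; positivity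
            have h7 : θ * (∑ k, |Q j k|) ≤ θ * (∑ j, ∑ k, |Q j k|) :=
              mul_le_mul_of_nonneg_left h5 hθ.le
            rw [hCAdef]; linarith
  -- negate and extract a sequence
  by_contra hcon
  push_neg at hcon
  have hseq : ∀ m : ℕ, ∃ lam : ℝ, (0 < lam ∧ lam ≤ δε / (m + 1) ∧ lam ≤ δε) ∧
      ∃ μ : ℂ, ∃ v : (Fin n ⊕ Fin n) → ℂ, v ≠ 0 ∧
        (Amat P Q b θ lam ε (xy lam ε).1 (xy lam ε).2).mulVec v = μ • v ∧ 0 ≤ μ.re := by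
    intro m
    have hmem : δε / (m + 1) ∈ Set.Ioc 0 δε := by
      constructor
      · positivity
      · apply div_le_self hδε.le
        have : (0:ℝ) ≤ (m:ℝ) := Nat.cast_nonneg m
        linarith
    obtain ⟨lam, hlam, μ, hIsEig, hre⟩ := hcon (δε / (m+1)) hmem
    obtain ⟨v, hv0, hveq⟩ := hIsEig
    exact ⟨lam, ⟨hlam.1, hlam.2, hlam.2.trans hmem.2⟩, μ, v, hv0, hveq, hre⟩
  choose L hL μs vs hvs0 hvseq hvsre using hseq
  have hLIoc : ∀ m, L m ∈ Set.Ioc 0 δε := fun m => ⟨(hL m).1, (hL m).2.2⟩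
  have hLIcc : ∀ m, L m ∈ Set.Icc 0 δε := fun m => ⟨(hL m).1.le, (hL m).2.2⟩
  -- normalize the eigenvectors
  set V : ℕ → (Fin n ⊕ Fin n) → ℂ := fun m => ((‖vs m‖ : ℂ))⁻¹ • vs m with hVdef
  have hnorm_ne : ∀ m, (‖vs m‖ : ℂ) ≠ 0 := by
    intro m
    simp only [ne_eq, Complex.ofReal_eq_zero, norm_eq_zero]
    exact hvs0 m
  have hVnorm : ∀ m, ‖V m‖ = 1 := by
    intro m
    rw [hVdef]
    simp only [norm_smul, norm_inv, Complex.norm_real, Real.norm_eq_abs, abs_norm]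
    rw [inv_mul_cancel₀ (norm_ne_zero_iff.mpr (hvs0 m))]
  have hVeig : ∀ m, (Amat P Q b θ (L m) ε (xy (L m) ε).1 (xy (L m) ε).2).mulVec (V m)
      = μs m • V m := by
    intro m
    rw [hVdef]
    simp only
    rw [Matrix.mulVec_smul, hvseq m, smul_comm]
  have hμbound : ∀ m, ‖μs m‖ ≤ CA := by
    intro m
    have h1 : ‖μs m • V m‖ = ‖μs m‖ := by
      rw [norm_smul, hVnorm m, mul_one]
    rw [← h1, ← hVeig m]
    exact hAct (L m) (hLIoc m) (V m) (hVnorm m).le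
  -- compactness: extract a convergent subsequence
  set D : Set (((Fin n ⊕ Fin n) → ℂ) × ℂ) :=
    (Metric.sphere (0 : (Fin n ⊕ Fin n) → ℂ) 1) ×ˢ (Metric.closedBall (0:ℂ) CA) with hDdef
  have hDcomp : IsCompact D := (isCompact_sphere _ _).prod (isCompact_closedBall _ _)
  have hmemD : ∀ m, (V m, μs m) ∈ D := by
    intro m
    constructor
    · simp only [mem_sphere_iff_norm, sub_zero]
      exact hVnorm m
    · simp only [Metric.mem_closedBall, dist_zero_right]
      exact hμbound m
  obtain ⟨⟨vst, μst⟩, hstD, φ, hφ, hconv⟩ := hDcomp.tendsto_subseq hmemD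
  have hvstnorm : ‖vst‖ = 1 := by
    have := hstD.1
    simpa [mem_sphere_iff_norm] using this
  have hvst0 : vst ≠ 0 := by
    intro h
    rw [h, norm_zero] at hvstnorm
    norm_num at hvstnorm
  -- convergence facts
  have hVt : Filter.Tendsto (fun m => V (φ m)) Filter.atTop (nhds vst) :=
    (continuous_fst.tendsto (vst, μst)).comp hconv
  have hμt : Filter.Tendsto (fun m => μs (φ m)) Filter.atTop (nhds μst) :=
    (continuous_snd.tendsto (vst, μst)).comp hconv
  have hVct : ∀ i, Filter.Tendsto (fun m => V (φ m) i) Filter.atTop (nhds (vst i)) :=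
    fun i => tendsto_pi_nhds.mp hVt i
  have hΛ0 : Filter.Tendsto (fun m => L (φ m)) Filter.atTop (nhds 0) := by
    have hub : ∀ m : ℕ, L (φ m) ≤ δε / (m + 1) := by
      intro m
      refine (hL (φ m)).2.1.trans ?_
      have h2 : m ≤ φ m := hφ.le_apply
      have h3 : ((m:ℝ) + 1) ≤ ((φ m : ℝ) + 1) := by push_cast; exact_mod_cast by linarith [h2]
      gcongr
    have h1 : Filter.Tendsto (fun m : ℕ => δε * (1 / (m + 1 : ℝ))) Filter.atTop (nhds (δε * 0)) :=
      Filter.Tendsto.const_mul δε tendsto_one_div_add_atTop_nhds_zero_nat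
    rw [mul_zero] at h1
    apply squeeze_zero (fun m => (hL (φ m)).1.le) hub
    simpa [div_eq_mul_inv] using h1
  have hre_st : 0 ≤ μst.re := by
    apply ge_of_tendsto' ((Complex.continuous_re.tendsto μst).comp hμt)
    exact fun m => hvsre (φ m)
  -- convergence of the equilibrium family
  have hxyt : Filter.Tendsto (fun m => xy (L (φ m)) ε) Filter.atTop (nhds (x0, y0)) := by
    rw [← hxy0']
    have h1 : Filter.Tendsto (fun m => L (φ m)) Filter.atTop (nhdsWithin 0 (Set.Icc 0 δε)) :=
      tendsto_nhdsWithin_of_tendsto_nhds_of_eventually_within _ hΛ0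
        (Filter.Eventually.of_forall (fun m => hLIcc (φ m)))
    exact Filter.Tendsto.comp (hcont 0 ⟨le_refl 0, hδε.le⟩) h1
  have hxt : ∀ j, Filter.Tendsto (fun m => (xy (L (φ m)) ε).1 j) Filter.atTop (nhds (x0 j)) := by
    intro j
    have : Continuous (fun p : (Fin n → ℝ) × (Fin n → ℝ) => p.1 j) :=
      (continuous_apply j).comp continuous_fst
    exact (this.tendsto _).comp hxyt
  have hyt : ∀ j, Filter.Tendsto (fun m => (xy (L (φ m)) ε).2 j) Filter.atTop (nhds (y0 j)) := by
    intro j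
    have : Continuous (fun p : (Fin n → ℝ) × (Fin n → ℝ) => p.2 j) :=
      (continuous_apply j).comp continuous_snd
    exact (this.tendsto _).comp hxyt
  -- coordinate identities along the subsequence
  have hΛC : Filter.Tendsto (fun m => ((L (φ m) : ℝ) : ℂ)) Filter.atTop (nhds 0) := by
    have := (Complex.continuous_ofReal.tendsto 0).comp hΛ0
    rw [Complex.ofReal_zero] at this; exact this
  have Ej1 : ∀ m j, (∑ k, (P j k : ℂ) * V (φ m) (Sum.inl k))
      + ((L (φ m) : ℝ) : ℂ) * (((2 * (xy (L (φ m)) ε).1 j * (xy (L (φ m)) ε).2 j - ε * b j - 1 : ℝ) : ℂ) * V (φ m) (Sum.inl j)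
        + ((((xy (L (φ m)) ε).1 j) ^ 2 : ℝ) : ℂ) * V (φ m) (Sum.inr j))
      = μs (φ m) * V (φ m) (Sum.inl j) := by
    intro m j
    have h := congrFun (hVeig (φ m)) (Sum.inl j)
    rw [Amat_inl] at h
    simpa [Pi.smul_apply, smul_eq_mul] using h
  have Ej2 : ∀ m j, (θ : ℂ) * (∑ k, (Q j k : ℂ) * V (φ m) (Sum.inr k))
      + ((L (φ m) : ℝ) : ℂ) * (((ε * b j - 2 * (xy (L (φ m)) ε).1 j * (xy (L (φ m)) ε).2 j : ℝ) : ℂ) * V (φ m) (Sum.inl j)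
        - ((((xy (L (φ m)) ε).1 j) ^ 2 : ℝ) : ℂ) * V (φ m) (Sum.inr j))
      = μs (φ m) * V (φ m) (Sum.inr j) := by
    intro m j
    have h := congrFun (hVeig (φ m)) (Sum.inr j)
    rw [Amat_inr] at h
    simpa [Pi.smul_apply, smul_eq_mul] using h
  -- limits of the coefficient functions
  have hM1t : ∀ j, Filter.Tendsto
      (fun m => ((2 * (xy (L (φ m)) ε).1 j * (xy (L (φ m)) ε).2 j - ε * b j - 1 : ℝ) : ℂ))
      Filter.atTop (nhds ((2 * x0 j * y0 j - ε * b j - 1 : ℝ) : ℂ)) := by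
    intro j
    apply (Complex.continuous_ofReal.tendsto _).comp
    exact ((((hxt j).const_mul 2).mul (hyt j)).sub tendsto_const_nhds).sub tendsto_const_nhds
  have hM2t : ∀ j, Filter.Tendsto
      (fun m => ((((xy (L (φ m)) ε).1 j) ^ 2 : ℝ) : ℂ))
      Filter.atTop (nhds (((x0 j) ^ 2 : ℝ) : ℂ)) := by
    intro j
    apply (Complex.continuous_ofReal.tendsto _).comp
    exact (hxt j).pow 2
  have hM3t : ∀ j, Filter.Tendsto
      (fun m => ((ε * b j - 2 * (xy (L (φ m)) ε).1 j * (xy (L (φ m)) ε).2 j : ℝ) : ℂ))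
      Filter.atTop (nhds ((ε * b j - 2 * x0 j * y0 j : ℝ) : ℂ)) := by
    intro j
    apply (Complex.continuous_ofReal.tendsto _).comp
    exact tendsto_const_nhds.sub (((hxt j).const_mul 2).mul (hyt j))
  -- limit eigen-equations
  have Estar1 : ∀ j, (∑ k, (P j k : ℂ) * vst (Sum.inl k)) = μst * vst (Sum.inl j) := by
    intro j
    have hL1 : Filter.Tendsto (fun m => (∑ k, (P j k : ℂ) * V (φ m) (Sum.inl k))
        + ((L (φ m) : ℝ) : ℂ) * (((2 * (xy (L (φ m)) ε).1 j * (xy (L (φ m)) ε).2 j - ε * b j - 1 : ℝ) : ℂ) * V (φ m) (Sum.inl j)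
          + ((((xy (L (φ m)) ε).1 j) ^ 2 : ℝ) : ℂ) * V (φ m) (Sum.inr j)))
        Filter.atTop (nhds ((∑ k, (P j k : ℂ) * vst (Sum.inl k)) + 0 *
          (((2 * x0 j * y0 j - ε * b j - 1 : ℝ) : ℂ) * vst (Sum.inl j)
            + (((x0 j) ^ 2 : ℝ) : ℂ) * vst (Sum.inr j)))) := by
      apply Filter.Tendsto.add
      · exact tendsto_finset_sum _ (fun k _ => tendsto_const_nhds.mul (hVct (Sum.inl k)))
      · exact hΛC.mul (((hM1t j).mul (hVct (Sum.inl j))).add ((hM2t j).mul (hVct (Sum.inr j))))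
    rw [zero_mul, add_zero] at hL1
    have hR1 : Filter.Tendsto (fun m => μs (φ m) * V (φ m) (Sum.inl j)) Filter.atTop
        (nhds (μst * vst (Sum.inl j))) := hμt.mul (hVct (Sum.inl j))
    exact tendsto_nhds_unique (hL1.congr (fun m => Ej1 m j)) hR1
  have Estar2 : ∀ j, (θ : ℂ) * (∑ k, (Q j k : ℂ) * vst (Sum.inr k)) = μst * vst (Sum.inr j) := by
    intro j
    have hL1 : Filter.Tendsto (fun m => (θ : ℂ) * (∑ k, (Q j k : ℂ) * V (φ m) (Sum.inr k))
        + ((L (φ m) : ℝ) : ℂ) * (((ε * b j - 2 * (xy (L (φ m)) ε).1 j * (xy (L (φ m)) ε).2 j : ℝ) : ℂ) * V (φ m) (Sum.inl j)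
          - ((((xy (L (φ m)) ε).1 j) ^ 2 : ℝ) : ℂ) * V (φ m) (Sum.inr j)))
        Filter.atTop (nhds ((θ : ℂ) * (∑ k, (Q j k : ℂ) * vst (Sum.inr k)) + 0 *
          (((ε * b j - 2 * x0 j * y0 j : ℝ) : ℂ) * vst (Sum.inl j)
            - (((x0 j) ^ 2 : ℝ) : ℂ) * vst (Sum.inr j)))) := by
      apply Filter.Tendsto.add
      · exact tendsto_const_nhds.mul
          (tendsto_finset_sum _ (fun k _ => tendsto_const_nhds.mul (hVct (Sum.inr k))))
      · exact hΛC.mul (((hM3t j).mul (hVct (Sum.inl j))).sub ((hM2t j).mul (hVct (Sum.inr j))))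
    rw [zero_mul, add_zero] at hL1
    have hR1 : Filter.Tendsto (fun m => μs (φ m) * V (φ m) (Sum.inr j)) Filter.atTop
        (nhds (μst * vst (Sum.inr j))) := hμt.mul (hVct (Sum.inr j))
    exact tendsto_nhds_unique (hL1.congr (fun m => Ej2 m j)) hR1
  have hθC : (θ : ℂ) ≠ 0 := Complex.ofReal_ne_zero.mpr hθ.ne'
  rcases eq_or_ne μst 0 with hμ0 | hμ0
  · -- the zero limit eigenvalue case
    obtain ⟨c1, hc1⟩ := kerC hn0 P hPirr hPess hξpos hPξ (v := fun j => vst (Sum.inl j))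
      (fun j => by rw [show (∑ k, (P j k : ℂ) * vst (Sum.inl k)) = μst * vst (Sum.inl j) from Estar1 j, hμ0, zero_mul])
    obtain ⟨c2, hc2⟩ := kerC hn0 Q hQirr hQess hηpos hQη (v := fun j => vst (Sum.inr j))
      (fun j => by
        have h := Estar2 j
        rw [hμ0, zero_mul] at h
        exact (mul_eq_zero.mp h).resolve_left hθC)
    have hc12 : ¬ (c1 = 0 ∧ c2 = 0) := by
      rintro ⟨h1, h2⟩
      apply hvst0
      funext i
      cases i with
      | inl j => rw [show vst (Sum.inl j) = c1 * ((ξ j : ℝ) : ℂ) from hc1 j, h1, zero_mul]; rfl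
      | inr j => rw [show vst (Sum.inr j) = c2 * ((η j : ℝ) : ℂ) from hc2 j, h2, zero_mul]; rfl
    -- column sums vanish (complexified)
    have hPCsum : ∀ k, (∑ j, (P j k : ℂ)) = 0 := fun k => by exact_mod_cast hPcol k
    have hQCsum : ∀ k, (∑ j, (Q j k : ℂ)) = 0 := fun k => by exact_mod_cast hQcol k
    -- summed identities
    have sI : ∀ m, μs (φ m) * (∑ j, V (φ m) (Sum.inl j)) = ((L (φ m) : ℝ) : ℂ) *
        ((∑ j, ((2 * (xy (L (φ m)) ε).1 j * (xy (L (φ m)) ε).2 j - ε * b j - 1 : ℝ) : ℂ) * V (φ m) (Sum.inl j))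
          + (∑ j, ((((xy (L (φ m)) ε).1 j) ^ 2 : ℝ) : ℂ) * V (φ m) (Sum.inr j))) := by
      intro m
      have h := Finset.sum_congr rfl (fun j (_ : j ∈ Finset.univ) => Ej1 m j)
      rw [Finset.sum_add_distrib] at h
      have hzero : ∑ j, ∑ k, (P j k : ℂ) * V (φ m) (Sum.inl k) = 0 := by
        rw [Finset.sum_comm]
        refine Finset.sum_eq_zero (fun k _ => ?_)
        rw [← Finset.sum_mul, hPCsum k, zero_mul]
      rw [hzero, zero_add, ← Finset.mul_sum, Finset.sum_add_distrib, ← Finset.mul_sum] at h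
      exact h.symm
    have tI : ∀ m, μs (φ m) * (∑ j, V (φ m) (Sum.inr j)) = ((L (φ m) : ℝ) : ℂ) *
        ((∑ j, ((ε * b j - 2 * (xy (L (φ m)) ε).1 j * (xy (L (φ m)) ε).2 j : ℝ) : ℂ) * V (φ m) (Sum.inl j))
          - (∑ j, ((((xy (L (φ m)) ε).1 j) ^ 2 : ℝ) : ℂ) * V (φ m) (Sum.inr j))) := by
      intro m
      have h := Finset.sum_congr rfl (fun j (_ : j ∈ Finset.univ) => Ej2 m j)
      rw [Finset.sum_add_distrib] at h
      have hzero : ∑ j, (θ : ℂ) * ∑ k, (Q j k : ℂ) * V (φ m) (Sum.inr k) = 0 := by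
        rw [← Finset.mul_sum]
        have h2 : ∑ j, ∑ k, (Q j k : ℂ) * V (φ m) (Sum.inr k) = 0 := by
          rw [Finset.sum_comm]
          refine Finset.sum_eq_zero (fun k _ => ?_)
          rw [← Finset.sum_mul, hQCsum k, zero_mul]
        rw [h2, mul_zero]
      rw [hzero, zero_add, ← Finset.mul_sum, Finset.sum_sub_distrib, ← Finset.mul_sum] at h
      exact h.symm
    -- limits of the sums of eigenvector coordinates
    have hstv : (∑ j, vst (Sum.inl j)) = c1 := by
      rw [Finset.sum_congr rfl (fun j (_ : j ∈ Finset.univ) => hc1 j), ← Finset.mul_sum]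
      rw [show (∑ j, ((ξ j : ℝ) : ℂ)) = 1 by exact_mod_cast hξsum, mul_one]
    have httv : (∑ j, vst (Sum.inr j)) = c2 := by
      rw [Finset.sum_congr rfl (fun j (_ : j ∈ Finset.univ) => hc2 j), ← Finset.mul_sum]
      rw [show (∑ j, ((η j : ℝ) : ℂ)) = 1 by exact_mod_cast hηsum, mul_one]
    have hsT : Filter.Tendsto (fun m => ∑ j, V (φ m) (Sum.inl j)) Filter.atTop (nhds c1) := by
      rw [← hstv]
      exact tendsto_finset_sum _ (fun j _ => hVct (Sum.inl j))
    have htT : Filter.Tendsto (fun m => ∑ j, V (φ m) (Sum.inr j)) Filter.atTop (nhds c2) := by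
      rw [← httv]
      exact tendsto_finset_sum _ (fun j _ => hVct (Sum.inr j))
    -- the real constants
    have hc0S : c0 * r * S = ε * Bb := by
      rw [hrdef]
      field_simp
    have hA11 : (∑ j, (2 * x0 j * y0 j - ε * b j - 1) * ξ j) = ε * Bb - 1 := by
      have h1 : ∀ j ∈ Finset.univ, (2 * x0 j * y0 j - ε * b j - 1) * ξ j
          = 2 * (c0 * r) * ((ξ j) ^ 2 * η j) - ε * (b j * ξ j) - ξ j := by
        intro j _
        rw [hx0def, hy0def]
        ring
      rw [Finset.sum_congr rfl h1]
      rw [Finset.sum_sub_distrib, Finset.sum_sub_distrib, ← Finset.mul_sum, ← Finset.mul_sum]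
      rw [← hSdef, ← hBbdef, hξsum]
      linear_combination 2 * hc0S
    have hA12 : (∑ j, (x0 j) ^ 2 * η j) = c0 ^ 2 * S := by
      have h1 : ∀ j ∈ Finset.univ, (x0 j) ^ 2 * η j = c0 ^ 2 * ((ξ j) ^ 2 * η j) := by
        intro j _
        rw [hx0def]
        ring
      rw [Finset.sum_congr rfl h1, ← Finset.mul_sum, ← hSdef]
    have hA21 : (∑ j, (ε * b j - 2 * x0 j * y0 j) * ξ j) = -(ε * Bb) := by
      have h1 : ∀ j ∈ Finset.univ, (ε * b j - 2 * x0 j * y0 j) * ξ j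
          = ε * (b j * ξ j) - 2 * (c0 * r) * ((ξ j) ^ 2 * η j) := by
        intro j _
        rw [hx0def, hy0def]
        ring
      rw [Finset.sum_congr rfl h1]
      rw [Finset.sum_sub_distrib, ← Finset.mul_sum, ← Finset.mul_sum]
      rw [← hSdef, ← hBbdef]
      linear_combination (-2) * hc0S
    -- limits of the perturbation sums
    have hval1 : (∑ j, ((2 * x0 j * y0 j - ε * b j - 1 : ℝ) : ℂ) * vst (Sum.inl j))
        = c1 * ((ε * Bb - 1 : ℝ) : ℂ) := by
      have h2 : ∀ j ∈ Finset.univ, ((2 * x0 j * y0 j - ε * b j - 1 : ℝ) : ℂ) * vst (Sum.inl j)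
          = c1 * (((2 * x0 j * y0 j - ε * b j - 1) * ξ j : ℝ) : ℂ) := by
        intro j _
        rw [hc1 j]
        push_cast
        ring
      rw [Finset.sum_congr rfl h2, ← Finset.mul_sum]
      congr 1
      exact_mod_cast congrArg Complex.ofReal hA11
    have hval2 : (∑ j, (((x0 j) ^ 2 : ℝ) : ℂ) * vst (Sum.inr j))
        = c2 * ((c0 ^ 2 * S : ℝ) : ℂ) := by
      have h2 : ∀ j ∈ Finset.univ, (((x0 j) ^ 2 : ℝ) : ℂ) * vst (Sum.inr j)
          = c2 * ((((x0 j) ^ 2) * η j : ℝ) : ℂ) := by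
        intro j _
        rw [hc2 j]
        push_cast
        ring
      rw [Finset.sum_congr rfl h2, ← Finset.mul_sum]
      congr 1
      exact_mod_cast congrArg Complex.ofReal hA12
    have hval3 : (∑ j, ((ε * b j - 2 * x0 j * y0 j : ℝ) : ℂ) * vst (Sum.inl j))
        = c1 * ((-(ε * Bb) : ℝ) : ℂ) := by
      have h2 : ∀ j ∈ Finset.univ, ((ε * b j - 2 * x0 j * y0 j : ℝ) : ℂ) * vst (Sum.inl j)
          = c1 * (((ε * b j - 2 * x0 j * y0 j) * ξ j : ℝ) : ℂ) := by
        intro j _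
        rw [hc1 j]
        push_cast
        ring
      rw [Finset.sum_congr rfl h2, ← Finset.mul_sum]
      congr 1
      exact_mod_cast congrArg Complex.ofReal hA21
    have hAT : Filter.Tendsto (fun m =>
        (∑ j, ((2 * (xy (L (φ m)) ε).1 j * (xy (L (φ m)) ε).2 j - ε * b j - 1 : ℝ) : ℂ) * V (φ m) (Sum.inl j))
          + (∑ j, ((((xy (L (φ m)) ε).1 j) ^ 2 : ℝ) : ℂ) * V (φ m) (Sum.inr j)))
        Filter.atTop (nhds (c1 * ((ε * Bb - 1 : ℝ) : ℂ) + c2 * ((c0 ^ 2 * S : ℝ) : ℂ))) := by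
      rw [← hval1, ← hval2]
      exact (tendsto_finset_sum _ (fun j _ => (hM1t j).mul (hVct (Sum.inl j)))).add
        (tendsto_finset_sum _ (fun j _ => (hM2t j).mul (hVct (Sum.inr j))))
    have hBT : Filter.Tendsto (fun m =>
        (∑ j, ((ε * b j - 2 * (xy (L (φ m)) ε).1 j * (xy (L (φ m)) ε).2 j : ℝ) : ℂ) * V (φ m) (Sum.inl j))
          - (∑ j, ((((xy (L (φ m)) ε).1 j) ^ 2 : ℝ) : ℂ) * V (φ m) (Sum.inr j)))
        Filter.atTop (nhds (c1 * ((-(ε * Bb) : ℝ) : ℂ) - c2 * ((c0 ^ 2 * S : ℝ) : ℂ))) := by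
      rw [← hval3, ← hval2]
      exact (tendsto_finset_sum _ (fun j _ => (hM3t j).mul (hVct (Sum.inl j)))).sub
        (tendsto_finset_sum _ (fun j _ => (hM2t j).mul (hVct (Sum.inr j))))
    -- the rescaled eigenvalues
    have hLne : ∀ m, ((L (φ m) : ℝ) : ℂ) ≠ 0 :=
      fun m => Complex.ofReal_ne_zero.mpr (hL (φ m)).1.ne'
    have hσS : ∀ m, (μs (φ m) * (((L (φ m) : ℝ) : ℂ))⁻¹) * (∑ j, V (φ m) (Sum.inl j))
        = (∑ j, ((2 * (xy (L (φ m)) ε).1 j * (xy (L (φ m)) ε).2 j - ε * b j - 1 : ℝ) : ℂ) * V (φ m) (Sum.inl j))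
          + (∑ j, ((((xy (L (φ m)) ε).1 j) ^ 2 : ℝ) : ℂ) * V (φ m) (Sum.inr j)) := by
      intro m
      have h := sI m
      rw [show (∑ j, ((2 * (xy (L (φ m)) ε).1 j * (xy (L (φ m)) ε).2 j - ε * b j - 1 : ℝ) : ℂ) * V (φ m) (Sum.inl j))
          + (∑ j, ((((xy (L (φ m)) ε).1 j) ^ 2 : ℝ) : ℂ) * V (φ m) (Sum.inr j))
        = (((L (φ m) : ℝ) : ℂ))⁻¹ * (μs (φ m) * (∑ j, V (φ m) (Sum.inl j))) from by
          rw [h, ← mul_assoc, inv_mul_cancel₀ (hLne m), one_mul]]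
      ring
    have hσT : ∀ m, (μs (φ m) * (((L (φ m) : ℝ) : ℂ))⁻¹) * (∑ j, V (φ m) (Sum.inr j))
        = (∑ j, ((ε * b j - 2 * (xy (L (φ m)) ε).1 j * (xy (L (φ m)) ε).2 j : ℝ) : ℂ) * V (φ m) (Sum.inl j))
          - (∑ j, ((((xy (L (φ m)) ε).1 j) ^ 2 : ℝ) : ℂ) * V (φ m) (Sum.inr j)) := by
      intro m
      have h := tI m
      rw [show (∑ j, ((ε * b j - 2 * (xy (L (φ m)) ε).1 j * (xy (L (φ m)) ε).2 j : ℝ) : ℂ) * V (φ m) (Sum.inl j))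
          - (∑ j, ((((xy (L (φ m)) ε).1 j) ^ 2 : ℝ) : ℂ) * V (φ m) (Sum.inr j))
        = (((L (φ m) : ℝ) : ℂ))⁻¹ * (μs (φ m) * (∑ j, V (φ m) (Sum.inr j))) from by
          rw [h, ← mul_assoc, inv_mul_cancel₀ (hLne m), one_mul]]
      ring
    -- existence of the limit rescaled eigenvalue
    have hκ : ∃ σ : ℂ, Filter.Tendsto (fun m => μs (φ m) * (((L (φ m) : ℝ) : ℂ))⁻¹)
        Filter.atTop (nhds σ)
        ∧ σ * c1 = c1 * ((ε * Bb - 1 : ℝ) : ℂ) + c2 * ((c0 ^ 2 * S : ℝ) : ℂ)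
        ∧ σ * c2 = c1 * ((-(ε * Bb) : ℝ) : ℂ) - c2 * ((c0 ^ 2 * S : ℝ) : ℂ) := by
      rcases not_and_or.mp hc12 with hc1ne | hc2ne
      · have hev : ∀ᶠ m in Filter.atTop, (∑ j, V (φ m) (Sum.inl j)) ≠ 0 := hsT.eventually_ne hc1ne
        have hdiv : Filter.Tendsto (fun m =>
            ((∑ j, ((2 * (xy (L (φ m)) ε).1 j * (xy (L (φ m)) ε).2 j - ε * b j - 1 : ℝ) : ℂ) * V (φ m) (Sum.inl j))
              + (∑ j, ((((xy (L (φ m)) ε).1 j) ^ 2 : ℝ) : ℂ) * V (φ m) (Sum.inr j)))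
            / (∑ j, V (φ m) (Sum.inl j))) Filter.atTop
            (nhds ((c1 * ((ε * Bb - 1 : ℝ) : ℂ) + c2 * ((c0 ^ 2 * S : ℝ) : ℂ)) / c1)) :=
          hAT.div hsT hc1ne
        have htend : Filter.Tendsto (fun m => μs (φ m) * (((L (φ m) : ℝ) : ℂ))⁻¹)
            Filter.atTop (nhds ((c1 * ((ε * Bb - 1 : ℝ) : ℂ) + c2 * ((c0 ^ 2 * S : ℝ) : ℂ)) / c1)) := by
          refine hdiv.congr' (hev.mono (fun m hm => ?_))
          rw [div_eq_iff hm]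
          exact (hσS m).symm
        refine ⟨_, htend, div_mul_cancel₀ _ hc1ne, ?_⟩
        exact tendsto_nhds_unique (htend.mul htT) (hBT.congr (fun m => (hσT m).symm))
      · have hev : ∀ᶠ m in Filter.atTop, (∑ j, V (φ m) (Sum.inr j)) ≠ 0 := htT.eventually_ne hc2ne
        have hdiv : Filter.Tendsto (fun m =>
            ((∑ j, ((ε * b j - 2 * (xy (L (φ m)) ε).1 j * (xy (L (φ m)) ε).2 j : ℝ) : ℂ) * V (φ m) (Sum.inl j))
              - (∑ j, ((((xy (L (φ m)) ε).1 j) ^ 2 : ℝ) : ℂ) * V (φ m) (Sum.inr j)))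
            / (∑ j, V (φ m) (Sum.inr j))) Filter.atTop
            (nhds ((c1 * ((-(ε * Bb) : ℝ) : ℂ) - c2 * ((c0 ^ 2 * S : ℝ) : ℂ)) / c2)) :=
          hBT.div htT hc2ne
        have htend : Filter.Tendsto (fun m => μs (φ m) * (((L (φ m) : ℝ) : ℂ))⁻¹)
            Filter.atTop (nhds ((c1 * ((-(ε * Bb) : ℝ) : ℂ) - c2 * ((c0 ^ 2 * S : ℝ) : ℂ)) / c2)) := by
          refine hdiv.congr' (hev.mono (fun m hm => ?_))
          rw [div_eq_iff hm]
          exact (hσT m).symm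
        refine ⟨_, htend, ?_, div_mul_cancel₀ _ hc2ne⟩
        exact tendsto_nhds_unique (htend.mul hsT) (hAT.congr (fun m => (hσS m).symm))
    obtain ⟨σ, hσtend, hσ1, hσ2⟩ := hκ
    have hσre : 0 ≤ σ.re := by
      apply ge_of_tendsto' ((Complex.continuous_re.tendsto σ).comp hσtend)
      intro m
      show 0 ≤ (μs (φ m) * (((L (φ m) : ℝ) : ℂ))⁻¹).re
      rw [← Complex.ofReal_inv, Complex.mul_re]
      simp only [Complex.ofReal_re, Complex.ofReal_im, mul_zero, sub_zero]
      exact mul_nonneg (hvsre (φ m)) (inv_nonneg.mpr (hL (φ m)).1.le)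
    -- both components are nonzero
    have hDpos : 0 < c0 ^ 2 * S := mul_pos (pow_pos hc0 2) hS
    have hDne : ((c0 ^ 2 * S : ℝ) : ℂ) ≠ 0 := Complex.ofReal_ne_zero.mpr hDpos.ne'
    have hEpos : 0 < ε * Bb := mul_pos hε0 hBb
    have hc1ne : c1 ≠ 0 := by
      intro h
      rw [h, mul_zero, zero_mul, zero_add] at hσ1
      exact hc12 ⟨h, by
        rcases mul_eq_zero.mp hσ1.symm with h2 | h2
        · exact h2
        · exact absurd h2 hDne⟩
    have hc2ne : c2 ≠ 0 := by
      intro h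
      rw [h, mul_zero, zero_mul, sub_zero] at hσ2
      apply hc12
      refine ⟨?_, h⟩
      rcases mul_eq_zero.mp hσ2.symm with h2 | h2
      · exact h2
      · exfalso
        rw [Complex.ofReal_eq_zero] at h2
        exact (neg_ne_zero.mpr hEpos.ne') h2
    -- the quadratic equation for σ
    have h1 : (σ - (((ε * Bb : ℝ) : ℂ) - 1)) * c1 = ((c0 ^ 2 * S : ℝ) : ℂ) * c2 := by
      push_cast at hσ1 ⊢
      linear_combination hσ1
    have h2 : (σ + ((c0 ^ 2 * S : ℝ) : ℂ)) * c2 = -(((ε * Bb : ℝ) : ℂ) * c1) := by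
      push_cast at hσ2 ⊢
      linear_combination hσ2
    have hquad : (σ - (((ε * Bb : ℝ) : ℂ) - 1)) * (σ + ((c0 ^ 2 * S : ℝ) : ℂ))
        + ((c0 ^ 2 * S : ℝ) : ℂ) * ((ε * Bb : ℝ) : ℂ) = 0 := by
      have hcc : c1 * c2 ≠ 0 := mul_ne_zero hc1ne hc2ne
      have h3 : ((σ - (((ε * Bb : ℝ) : ℂ) - 1)) * (σ + ((c0 ^ 2 * S : ℝ) : ℂ))
          + ((c0 ^ 2 * S : ℝ) : ℂ) * ((ε * Bb : ℝ) : ℂ)) * (c1 * c2) = 0 := by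
        linear_combination ((σ + ((c0 ^ 2 * S : ℝ) : ℂ)) * c2) * h1
          + (((c0 ^ 2 * S : ℝ) : ℂ) * c2) * h2
      exact (mul_eq_zero.mp h3).resolve_right hcc
    have hquad' : σ ^ 2 + ((c0 ^ 2 * S - ε * Bb + 1 : ℝ) : ℂ) * σ + ((c0 ^ 2 * S : ℝ) : ℂ) = 0 := by
      push_cast at hquad ⊢
      linear_combination hquad
    have hRe := congrArg Complex.re hquad'
    have hIm := congrArg Complex.im hquad'
    simp only [Complex.add_re, Complex.add_im, Complex.mul_re, Complex.mul_im,
      Complex.ofReal_re, Complex.ofReal_im, Complex.zero_re, Complex.zero_im,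
      pow_two, zero_mul, mul_zero, sub_zero, zero_add, add_zero, zero_sub, neg_zero] at hRe hIm
    have hT : 0 < c0 ^ 2 * S - ε * Bb + 1 := by linarith [hsmall]
    have hq0 : σ.im = 0 := by
      have h4 : σ.im * (σ.re + σ.re + (c0 ^ 2 * S - ε * Bb + 1)) = 0 := by
        linear_combination hIm
      rcases mul_eq_zero.mp h4 with h | h
      · exact h
      · linarith
    rw [hq0] at hRe
    nlinarith [hσre, hT, hDpos, sq_nonneg σ.re, hRe]
  · -- the nonzero limit eigenvalue case: contradiction with eigL
    by_cases hvl : (fun j => vst (Sum.inl j)) = (0 : Fin n → ℂ)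
    · have hvr : (fun j => vst (Sum.inr j)) ≠ (0 : Fin n → ℂ) := by
        intro h
        apply hvst0
        funext i
        cases i with
        | inl j => exact congrFun hvl j
        | inr j => exact congrFun h j
      have heig : (Q.map (fun t => (t : ℂ))).mulVec (fun j => vst (Sum.inr j))
          = (μst / (θ : ℂ)) • (fun j => vst (Sum.inr j)) := by
        funext j
        simp only [Matrix.mulVec, dotProduct, Matrix.map_apply, Pi.smul_apply, smul_eq_mul]
        rw [div_mul_eq_mul_div, eq_div_iff hθC]
        rw [← Estar2 j]
        ring
      have hre' : 0 ≤ (μst / (θ : ℂ)).re := by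
        rw [Complex.div_ofReal_re]
        exact div_nonneg hre_st hθ.le
      have := eigL hn0 Q hQess hQcol hvr heig hre'
      rw [div_eq_zero_iff] at this
      rcases this with h | h
      · exact hμ0 h
      · exact hθC h
    · have heig : (P.map (fun t => (t : ℂ))).mulVec (fun j => vst (Sum.inl j))
          = μst • (fun j => vst (Sum.inl j)) := by
        funext j
        simp only [Matrix.mulVec, dotProduct, Matrix.map_apply, Pi.smul_apply, smul_eq_mul]
        exact Estar1 j
      exact hμ0 (eigL hn0 P hPess hPcol hvl heig hre_st)
end

section
/- Assume ε is small enough that β₀ ∈ (ε, 1/ε). At λ = 0, the system H(δ, s₁, s₂, w, z, ν, β, 0) = 0 with constraints δ ≥ 0, s₁, s₂ ∈ ℝ, w, z ∈ M_ℂ, ν ≥ 0, β ∈ B has exactly one solution, namely ν = ν₀ = (∑_{j=1}^n a_j)√(∑_{j=1}^n ξ_j²η_j), β = β₀ = (ν₀² + 1)/(∑_{j=1}^n b_jξ_j), w = 0, z = 0, δ = δ₀ = √((‖ξ‖₂² + ‖η‖₂²)/(‖ξ‖₂² + (1 + 1/ν₀²)‖η‖₂²)), s₁ = −δ₀ and s₂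 = δ₀/ν₀. -/
open Finset Set

/-- The bracket `M₁ⱼ(δξⱼ+wⱼ) + M₂ⱼ((s₁+is₂)ηⱼ+zⱼ)` appearing in `H`. -/
noncomputable def HB1 {n : ℕ} (b ξ η : Fin n → ℝ) (β : ℝ) (x y : Fin n → ℝ)
    (δ s1 s2 : ℝ) (w z : Fin n → ℂ) (j : Fin n) : ℂ :=
  ((2 * x j * y j - β * b j - 1 : ℝ) : ℂ) * (((δ * ξ j : ℝ) : ℂ) + w j)
    + (((x j) ^ 2 : ℝ) : ℂ) *
      (((s1 : ℂ) + (s2 : ℂ) * Complex.I) * ((η j : ℝ) : ℂ) + z j)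

/-- The bracket `M₃ⱼ(δξⱼ+wⱼ) - M₂ⱼ((s₁+is₂)ηⱼ+zⱼ)` appearing in `H`. -/
noncomputable def HB3 {n : ℕ} (b ξ η : Fin n → ℝ) (β : ℝ) (x y : Fin n → ℝ)
    (δ s1 s2 : ℝ) (w z : Fin n → ℂ) (j : Fin n) : ℂ :=
  ((β * b j - 2 * x j * y j : ℝ) : ℂ) * (((δ * ξ j : ℝ) : ℂ) + w j)
    - (((x j) ^ 2 : ℝ) : ℂ) *
      (((s1 : ℂ) + (s2 : ℂ) * Complex.I) * ((η j : ℝ) : ℂ) + z j)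

/-- Component `h₁` of `H`. -/
noncomputable def Hh1 {n : ℕ} (b ξ η : Fin n → ℝ) (β : ℝ) (x y : Fin n → ℝ)
    (δ s1 s2 : ℝ) (w z : Fin n → ℂ) (ν : ℝ) : ℂ :=
  (∑ j, HB1 b ξ η β x y δ s1 s2 w z j) - Complex.I * (ν : ℂ) * (δ : ℂ)

/-- Component `h₃` of `H`. -/
noncomputable def Hh3 {n : ℕ} (b ξ η : Fin n → ℝ) (β : ℝ) (x y : Fin n → ℝ)
    (δ s1 s2 : ℝ) (w z : Fin n → ℂ) (ν : ℝ) : ℂ :=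
  (∑ j, HB3 b ξ η β x y δ s1 s2 w z j)
    - Complex.I * (ν : ℂ) * ((s1 : ℂ) + (s2 : ℂ) * Complex.I)

/-- The full system `H(δ, s₁, s₂, w, z, ν, β, λ) = 0`
(components `h₁`, `h_{2j}`, `h₃`, `h_{4j}`, `h₅`). -/
def HZero {n : ℕ} (P Q : Matrix (Fin n) (Fin n) ℝ) (b ξ η : Fin n → ℝ)
    (θ β lam : ℝ) (x y : Fin n → ℝ) (δ s1 s2 : ℝ) (w z : Fin n → ℂ) (ν : ℝ) : Prop :=
  Hh1 b ξ η β x y δ s1 s2 w z ν = 0 ∧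
  (∀ j, (∑ k, (P j k : ℂ) * w k) + (lam : ℂ) * HB1 b ξ η β x y δ s1 s2 w z j
      - Complex.I * (lam : ℂ) * (ν : ℂ) * (((δ * ξ j : ℝ) : ℂ) + w j)
      - (lam : ℂ) / (n : ℂ) * Hh1 b ξ η β x y δ s1 s2 w z ν = 0) ∧
  Hh3 b ξ η β x y δ s1 s2 w z ν = 0 ∧
  (∀ j, (θ : ℂ) * (∑ k, (Q j k : ℂ) * z k) + (lam : ℂ) * HB3 b ξ η β x y δ s1 s2 w z j
      - Complex.I * (lam : ℂ) * (ν : ℂ) *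
          (((s1 : ℂ) + (s2 : ℂ) * Complex.I) * ((η j : ℝ) : ℂ) + z j)
      - (lam : ℂ) / (n : ℂ) * Hh3 b ξ η β x y δ s1 s2 w z ν = 0) ∧
  (∑ j, Complex.normSq (((δ * ξ j : ℝ) : ℂ) + w j))
    + (∑ j, Complex.normSq (((s1 : ℂ) + (s2 : ℂ) * Complex.I) * ((η j : ℝ) : ℂ) + z j))
    - (∑ j, (ξ j) ^ 2) - (∑ j, (η j) ^ 2) = 0

private lemma const_of_colker {n : ℕ} {P : Matrix (Fin n) (Fin n) ℝ}
    (hirr : MatIrred P) (hess : EssNonneg P) (hcol : ZeroColSums P)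
    {u : Fin n → ℝ} (hu : ∀ k, ∑ i, P i k * u i = 0) :
    ∀ i j, u i = u j := by
  rcases Nat.eq_zero_or_pos n with h0 | hpos
  · subst h0; intro i; exact i.elim0
  obtain ⟨j₀, -, hmax⟩ := Finset.exists_max_image Finset.univ u ⟨⟨0, hpos⟩, Finset.mem_univ _⟩
  have hmax' : ∀ i, u i ≤ u j₀ := fun i => hmax i (Finset.mem_univ i)
  set S : Finset (Fin n) := Finset.univ.filter (fun j => u j = u j₀) with hS
  have hj₀S : j₀ ∈ S := by simp [hS]
  have hSuniv : S = Finset.univ := by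
    by_contra hne
    obtain ⟨j, hjS, k, hkS, hPjk⟩ := hirr S ⟨j₀, hj₀S⟩ hne
    have huk : u k = u j₀ := by simpa [hS] using hkS
    have huj : u j ≠ u j₀ := by simpa [hS] using hjS
    have hujlt : u j < u k := by
      rw [huk]; exact lt_of_le_of_ne (hmax' j) huj
    have hjk : j ≠ k := fun h => (hujlt.ne (by rw [h]))
    have hPpos : 0 < P j k := lt_of_le_of_ne (hess j k hjk) (Ne.symm hPjk)
    have key : ∑ i, P i k * (u i - u k) = 0 := by
      have : ∑ i, P i k * (u i - u k) = (∑ i, P i k * u i) - (∑ i, P i k) * u k := by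
        rw [Finset.sum_mul, ← Finset.sum_sub_distrib]
        congr 1; ext i; ring
      rw [this, hu k, hcol k]; ring
    have hnonpos : ∀ i ∈ Finset.univ, P i k * (u i - u k) ≤ 0 := by
      intro i _
      rcases eq_or_ne i k with rfl | hik
      · simp
      · exact mul_nonpos_of_nonneg_of_nonpos (hess i k hik)
          (by rw [huk]; linarith [hmax' i])
    have := (Finset.sum_eq_zero_iff_of_nonpos hnonpos).mp key j (Finset.mem_univ j)
    nlinarith
  intro i j
  have hi : i ∈ S := hSuniv ▸ Finset.mem_univ i
  have hj : j ∈ S := hSuniv ▸ Finset.mem_univ j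
  simp [hS] at hi hj; rw [hi, hj]

private lemma ker_vanish {n : ℕ} (hn : 2 ≤ n) {P : Matrix (Fin n) (Fin n) ℝ}
    (hirr : MatIrred P) (hess : EssNonneg P) (hcol : ZeroColSums P)
    {ξ : Fin n → ℝ} (hξsum : ∑ j, ξ j = 1) (hPξ : P.mulVec ξ = 0)
    {v : Fin n → ℝ} (hv : P.mulVec v = 0) (hsum : ∑ j, v j = 0) : v = 0 := by
  have hnpos : 0 < n := by omega
  set ones : Fin n → ℝ := fun _ => 1 with hones
  have hones_ne : ones ≠ 0 := by
    intro h; have := congrFun h ⟨0, hnpos⟩; simp [hones] at this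
  have hξ_ne : ξ ≠ 0 := by
    intro h; rw [h] at hξsum; simp at hξsum
  -- kernel of transpose is spanned by ones
  have hkerT : LinearMap.ker P.transpose.mulVecLin ≤ Submodule.span ℝ {ones} := by
    intro u hu
    have hu' : ∀ k, ∑ i, P i k * u i = 0 := by
      intro k
      have := congrFun (LinearMap.mem_ker.mp hu) k
      simp only [Matrix.mulVecLin_apply, Matrix.mulVec, dotProduct,
        Matrix.transpose_apply, Pi.zero_apply] at this
      rw [← this]
    have hconst := const_of_colker hirr hess hcol hu'
    have : u = (u ⟨0, hnpos⟩) • ones := by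
      ext i; simp [hones, hconst i ⟨0, hnpos⟩]
    rw [this]
    exact Submodule.smul_mem _ _ (Submodule.mem_span_singleton_self ones)
  have honesker : ones ∈ LinearMap.ker P.transpose.mulVecLin := by
    rw [LinearMap.mem_ker]
    ext k
    simp only [Matrix.mulVecLin_apply, Matrix.mulVec, dotProduct,
      Matrix.transpose_apply, Pi.zero_apply, hones, mul_one]
    exact hcol k
  have hkerTeq : LinearMap.ker P.transpose.mulVecLin = Submodule.span ℝ {ones} :=
    le_antisymm hkerT ((Submodule.span_singleton_le_iff_mem _ _).mpr honesker)
  have hfinT : Module.finrank ℝ (LinearMap.ker P.transpose.mulVecLin) = 1 := by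
    rw [hkerTeq]; exact finrank_span_singleton hones_ne
  have hrnT := LinearMap.finrank_range_add_finrank_ker P.transpose.mulVecLin
  have hrnP := LinearMap.finrank_range_add_finrank_ker P.mulVecLin
  have hrk : Matrix.rank P.transpose = Matrix.rank P := Matrix.rank_transpose P
  have hfinP : Module.finrank ℝ (LinearMap.ker P.mulVecLin) = 1 := by
    have hT : Matrix.rank P.transpose + 1 = n := by
      rw [← hfinT]
      have : Matrix.rank P.transpose = Module.finrank ℝ (LinearMap.range P.transpose.mulVecLin) := rfl
      rw [this]; simpa using hrnT
    have hP : Matrix.rank P + Module.finrank ℝ (LinearMap.ker P.mulVecLin) = n := by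
      have : Matrix.rank P = Module.finrank ℝ (LinearMap.range P.mulVecLin) := rfl
      rw [this]; simpa using hrnP
    omega
  have hξker : ξ ∈ LinearMap.ker P.mulVecLin := by
    rw [LinearMap.mem_ker]; ext k; simpa [Matrix.mulVecLin_apply] using congrFun hPξ k
  have hspanle : Submodule.span ℝ {ξ} ≤ LinearMap.ker P.mulVecLin :=
    (Submodule.span_singleton_le_iff_mem _ _).mpr hξker
  have hkerP : Submodule.span ℝ {ξ} = LinearMap.ker P.mulVecLin :=
    Submodule.eq_of_le_of_finrank_le hspanle (by rw [hfinP, finrank_span_singleton hξ_ne])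
  have hvker : v ∈ LinearMap.ker P.mulVecLin := by
    rw [LinearMap.mem_ker]; ext k; simpa [Matrix.mulVecLin_apply] using congrFun hv k
  rw [← hkerP, Submodule.mem_span_singleton] at hvker
  obtain ⟨c, hc⟩ := hvker
  have : c = 0 := by
    have := hsum
    rw [← hc] at this
    simp only [Pi.smul_apply, smul_eq_mul] at this
    rw [← Finset.mul_sum, hξsum] at this; simpa using this
  rw [← hc, this, zero_smul]

private lemma ker_vanish_complex {n : ℕ} (hn : 2 ≤ n) {P : Matrix (Fin n) (Fin n) ℝ}
    (hirr : MatIrred P) (hess : EssNonneg P) (hcol : ZeroColSums P)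
    {ξ : Fin n → ℝ} (hξsum : ∑ j, ξ j = 1) (hPξ : P.mulVec ξ = 0)
    {w : Fin n → ℂ} (hw : ∀ j, ∑ k, (P j k : ℂ) * w k = 0) (hsum : ∑ j, w j = 0) :
    w = 0 := by
  have hre : (fun k => (w k).re) = 0 := by
    apply ker_vanish hn hirr hess hcol hξsum hPξ
    · ext j
      have h := congrArg Complex.re (hw j)
      simp only [Complex.re_sum, Complex.zero_re] at h
      simp only [Matrix.mulVec, dotProduct, Pi.zero_apply]
      rw [← h]
      apply Finset.sum_congr rfl
      intro k _
      simp [Complex.re_ofReal_mul]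
    · have h := congrArg Complex.re hsum
      simpa [Complex.re_sum] using h
  have him : (fun k => (w k).im) = 0 := by
    apply ker_vanish hn hirr hess hcol hξsum hPξ
    · ext j
      have h := congrArg Complex.im (hw j)
      simp only [Complex.im_sum, Complex.zero_im] at h
      simp only [Matrix.mulVec, dotProduct, Pi.zero_apply]
      rw [← h]
      apply Finset.sum_congr rfl
      intro k _
      simp [Complex.im_ofReal_mul]
    · have h := congrArg Complex.im hsum
      simpa [Complex.im_sum] using h
  ext k
  have h1 := congrFun hre k
  have h2 := congrFun him k
  simp only [Pi.zero_apply] at h1 h2 ⊢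
  apply Complex.ext <;> simpa

private lemma extract1 {r1 r2 ν δ s1 s2 : ℝ}
    (h : ((r1:ℂ) + (r2:ℂ) * ((s1:ℂ)+(s2:ℂ)*Complex.I)) - Complex.I*(ν:ℂ)*(δ:ℂ) = 0) :
    r1 + r2*s1 = 0 ∧ r2*s2 - ν*δ = 0 := by
  have hre := congrArg Complex.re h
  have him := congrArg Complex.im h
  simp [Complex.mul_re, Complex.mul_im] at hre him
  constructor <;> linarith
lemma build1 {r1 r2 ν δ s1 s2 : ℝ}
    (h1 : r1 + r2*s1 = 0) (h2 : r2*s2 - ν*δ = 0) :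
    ((r1:ℂ) + (r2:ℂ) * ((s1:ℂ)+(s2:ℂ)*Complex.I)) - Complex.I*(ν:ℂ)*(δ:ℂ) = 0 := by
  apply Complex.ext <;> simp [Complex.mul_re, Complex.mul_im] <;> linarith
lemma extract3 {r3 r2 ν s1 s2 : ℝ}
    (h : ((r3:ℂ) - (r2:ℂ) * ((s1:ℂ)+(s2:ℂ)*Complex.I)) - Complex.I*(ν:ℂ)*((s1:ℂ)+(s2:ℂ)*Complex.I) = 0) :
    r3 - r2*s1 + ν*s2 = 0 ∧ -(r2*s2) - ν*s1 = 0 := by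
  have hre := congrArg Complex.re h
  have him := congrArg Complex.im h
  simp [Complex.mul_re, Complex.mul_im] at hre him
  constructor <;> linarith
lemma build3 {r3 r2 ν s1 s2 : ℝ}
    (h1 : r3 - r2*s1 + ν*s2 = 0) (h2 : -(r2*s2) - ν*s1 = 0) :
    ((r3:ℂ) - (r2:ℂ) * ((s1:ℂ)+(s2:ℂ)*Complex.I)) - Complex.I*(ν:ℂ)*((s1:ℂ)+(s2:ℂ)*Complex.I) = 0 := by
  apply Complex.ext <;> simp [Complex.mul_re, Complex.mul_im] <;> linarith

set_option maxHeartbeats 1000000 in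
/-- At `λ = 0` the system `H = 0`, under the constraints `δ ≥ 0`, `ν ≥ 0`,
`β ∈ B`, `w, z ∈ M_ℂ`, has exactly one solution
`(δ₀, -δ₀, δ₀/ν₀, 0, 0, ν₀, β₀)`. -/
theorem stmt_5 (n : ℕ) (hn : 2 ≤ n)
    (P Q : Matrix (Fin n) (Fin n) ℝ) (a b ξ η : Fin n → ℝ) (θ : ℝ)
    (ha : ∀ j, 0 < a j) (hb : ∀ j, 0 < b j) (hθ : 0 < θ)
    (hPirr : MatIrred P) (hQirr : MatIrred Q)
    (hPess : EssNonneg P) (hQess : EssNonneg Q)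
    (hPcol : ZeroColSums P) (hQcol : ZeroColSums Q)
    (hξpos : PosVec ξ) (hηpos : PosVec η)
    (hPξ : P.mulVec ξ = 0) (hQη : Q.mulVec η = 0)
    (hξsum : ∑ j, ξ j = 1) (hηsum : ∑ j, η j = 1)
    (ε : ℝ) (hε : ε ∈ Set.Ioo (0 : ℝ) 1)
    -- the globally defined equilibrium family on `[0, δε] × B`
    (δε : ℝ) (hδε : 0 < δε)
    (xy : ℝ → ℝ → (Fin n → ℝ) × (Fin n → ℝ))
    (hxyC1 : ContDiffOn ℝ 1 (fun p : ℝ × ℝ => xy p.1 p.2)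
      (Set.Icc 0 δε ×ˢ Set.Icc ε (1 / ε)))
    (hxy : ∀ lam ∈ Set.Ioc 0 δε, ∀ β ∈ Set.Icc ε (1 / ε),
      PosVec (xy lam β).1 ∧ PosVec (xy lam β).2 ∧
      IsEquilib P Q a b θ lam β (xy lam β).1 (xy lam β).2 ∧
      (∀ x y : Fin n → ℝ, PosVec x → PosVec y →
        IsEquilib P Q a b θ lam β x y → (x, y) = xy lam β))
    (hxy0 : ∀ β ∈ Set.Icc ε (1 / ε),
      xy 0 β = ((fun j => (∑ i, a i) * ξ j),
        (fun j => β * (∑ i, b i * ξ i) /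
          ((∑ i, a i) * (∑ i, (ξ i) ^ 2 * η i)) * η j)))
    -- the constants `ν₀`, `β₀`, `δ₀`
    (ν₀ β₀ δ₀ : ℝ)
    (hν₀ : ν₀ = (∑ j, a j) * Real.sqrt (∑ j, (ξ j) ^ 2 * η j))
    (hβ₀ : β₀ = (ν₀ ^ 2 + 1) / (∑ j, b j * ξ j))
    (hδ₀ : δ₀ = Real.sqrt ((∑ j, (ξ j) ^ 2 + ∑ j, (η j) ^ 2) /
      (∑ j, (ξ j) ^ 2 + (1 + 1 / ν₀ ^ 2) * ∑ j, (η j) ^ 2)))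
    -- `ε` is small enough that `β₀ ∈ (ε, 1/ε)`
    (hβ₀mem : β₀ ∈ Set.Ioo ε (1 / ε)) :
    ∀ (δ s1 s2 : ℝ) (w z : Fin n → ℂ) (ν β : ℝ),
      (0 ≤ δ ∧ 0 ≤ ν ∧ β ∈ Set.Icc ε (1 / ε) ∧
        (∑ j, w j = 0) ∧ (∑ j, z j = 0) ∧
        HZero P Q b ξ η θ β 0 (xy 0 β).1 (xy 0 β).2 δ s1 s2 w z ν) ↔
      (δ = δ₀ ∧ s1 = -δ₀ ∧ s2 = δ₀ / ν₀ ∧ w = 0 ∧ z = 0 ∧ ν = ν₀ ∧ β = β₀) := by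
  classical
  have hnpos : 0 < n := by omega
  set c : ℝ := ∑ j, a j with hc
  set B1 : ℝ := ∑ j, b j * ξ j with hB1def
  set Sv : ℝ := ∑ j, ξ j ^ 2 * η j with hSvdef
  set X : ℝ := ∑ j, ξ j ^ 2 with hXdef
  set Y : ℝ := ∑ j, η j ^ 2 with hYdef
  have hne : (Finset.univ : Finset (Fin n)).Nonempty := ⟨⟨0, hnpos⟩, Finset.mem_univ _⟩
  have hcpos : 0 < c := Finset.sum_pos (fun j _ => ha j) hne
  have hB1pos : 0 < B1 := Finset.sum_pos (fun j _ => mul_pos (hb j) (hξpos j)) hne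
  have hSvpos : 0 < Sv := Finset.sum_pos (fun j _ => mul_pos (pow_pos (hξpos j) 2) (hηpos j)) hne
  have hXpos : 0 < X := Finset.sum_pos (fun j _ => pow_pos (hξpos j) 2) hne
  have hYpos : 0 < Y := Finset.sum_pos (fun j _ => pow_pos (hηpos j) 2) hne
  have hν₀pos : 0 < ν₀ := by rw [hν₀]; exact mul_pos hcpos (Real.sqrt_pos.mpr hSvpos)
  have hν₀sq : ν₀ ^ 2 = c ^ 2 * Sv := by
    rw [hν₀, mul_pow, Real.sq_sqrt hSvpos.le]
  have hβ₀B1 : β₀ * B1 = ν₀ ^ 2 + 1 := by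
    rw [hβ₀]; field_simp
  have hDpos : 0 < X + (1 + 1 / ν₀ ^ 2) * Y := by
    have h1 : 0 < 1 + 1 / ν₀ ^ 2 := by positivity
    nlinarith
  have hδ₀sq : δ₀ ^ 2 * (X + (1 + 1 / ν₀ ^ 2) * Y) = X + Y := by
    rw [hδ₀, Real.sq_sqrt (by positivity)]
    field_simp
  have hδ₀pos : 0 < δ₀ := by
    rw [hδ₀]; apply Real.sqrt_pos.mpr; positivity
  have hβsub : ∀ β : ℝ, β ∈ Set.Icc ε (1 / ε) →
      (xy 0 β).1 = (fun j => c * ξ j) ∧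
      (xy 0 β).2 = (fun j => β * B1 / (c * Sv) * η j) := by
    intro β hβ
    rw [hxy0 β hβ]
    exact ⟨rfl, rfl⟩
  have SUM1 : ∀ β ∈ Set.Icc ε (1 / ε), ∀ δ s1 s2 : ℝ,
      ∑ j, HB1 b ξ η β (xy 0 β).1 (xy 0 β).2 δ s1 s2 0 0 j
      = (((β * B1 - 1) * δ : ℝ) : ℂ)
        + (((c ^ 2 * Sv) : ℝ) : ℂ) * ((s1 : ℂ) + (s2 : ℂ) * Complex.I) := by
    intro β hβ δ s1 s2
    have hx1' : ∀ j, (xy 0 β).1 j = c * ξ j := fun j => by rw [(hβsub β hβ).1]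
    have hy1' : ∀ j, (xy 0 β).2 j = β * B1 / (c * Sv) * η j := fun j => by rw [(hβsub β hβ).2]
    have e : ∀ j : Fin n, HB1 b ξ η β (xy 0 β).1 (xy 0 β).2 δ s1 s2 0 0 j
        = (((2 * ((xy 0 β).1 j) * ((xy 0 β).2 j) - β * b j - 1) * ξ j * δ : ℝ) : ℂ)
          + ((s1 : ℂ) + (s2 : ℂ) * Complex.I) * ((((xy 0 β).1 j) ^ 2 * η j : ℝ) : ℂ) := by
      intro j
      simp only [HB1, Pi.zero_apply, add_zero]
      push_cast
      ring
    rw [Finset.sum_congr rfl (fun j _ => e j), Finset.sum_add_distrib, ← Finset.mul_sum,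
      ← Complex.ofReal_sum, ← Complex.ofReal_sum]
    have r1 : ∑ j, (2 * ((xy 0 β).1 j) * ((xy 0 β).2 j) - β * b j - 1) * ξ j * δ
        = (β * B1 - 1) * δ := by
      rw [← Finset.sum_mul]
      have key : ∀ j : Fin n, (2 * ((xy 0 β).1 j) * ((xy 0 β).2 j) - β * b j - 1) * ξ j
          = 2 * β * B1 / Sv * (ξ j ^ 2 * η j) - β * (b j * ξ j) - ξ j := by
        intro j
        rw [hx1' j, hy1' j]
        field_simp
      rw [Finset.sum_congr rfl (fun j _ => key j), Finset.sum_sub_distrib,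
        Finset.sum_sub_distrib, ← Finset.mul_sum, ← Finset.mul_sum, ← hSvdef, ← hB1def, hξsum,
        div_mul_cancel₀ _ hSvpos.ne']
      ring
    have r2 : ∑ j, ((xy 0 β).1 j) ^ 2 * η j = c ^ 2 * Sv := by
      have key : ∀ j : Fin n, ((xy 0 β).1 j) ^ 2 * η j = c ^ 2 * (ξ j ^ 2 * η j) := by
        intro j; rw [hx1' j]; ring
      rw [Finset.sum_congr rfl (fun j _ => key j), ← Finset.mul_sum, ← hSvdef]
    rw [r1, r2]
    ring
  have SUM3 : ∀ β ∈ Set.Icc ε (1 / ε), ∀ δ s1 s2 : ℝ,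
      ∑ j, HB3 b ξ η β (xy 0 β).1 (xy 0 β).2 δ s1 s2 0 0 j
      = (((-(β * B1)) * δ : ℝ) : ℂ)
        - (((c ^ 2 * Sv) : ℝ) : ℂ) * ((s1 : ℂ) + (s2 : ℂ) * Complex.I) := by
    intro β hβ δ s1 s2
    have hx1' : ∀ j, (xy 0 β).1 j = c * ξ j := fun j => by rw [(hβsub β hβ).1]
    have hy1' : ∀ j, (xy 0 β).2 j = β * B1 / (c * Sv) * η j := fun j => by rw [(hβsub β hβ).2]
    have e : ∀ j : Fin n, HB3 b ξ η β (xy 0 β).1 (xy 0 β).2 δ s1 s2 0 0 j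
        = (((β * b j - 2 * ((xy 0 β).1 j) * ((xy 0 β).2 j)) * ξ j * δ : ℝ) : ℂ)
          - ((s1 : ℂ) + (s2 : ℂ) * Complex.I) * ((((xy 0 β).1 j) ^ 2 * η j : ℝ) : ℂ) := by
      intro j
      simp only [HB3, Pi.zero_apply, add_zero]
      push_cast
      ring
    rw [Finset.sum_congr rfl (fun j _ => e j), Finset.sum_sub_distrib, ← Finset.mul_sum,
      ← Complex.ofReal_sum, ← Complex.ofReal_sum]
    have r3 : ∑ j, (β * b j - 2 * ((xy 0 β).1 j) * ((xy 0 β).2 j)) * ξ j * δ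
        = (-(β * B1)) * δ := by
      rw [← Finset.sum_mul]
      have key : ∀ j : Fin n, (β * b j - 2 * ((xy 0 β).1 j) * ((xy 0 β).2 j)) * ξ j
          = β * (b j * ξ j) - 2 * β * B1 / Sv * (ξ j ^ 2 * η j) := by
        intro j
        rw [hx1' j, hy1' j]
        field_simp
      rw [Finset.sum_congr rfl (fun j _ => key j), Finset.sum_sub_distrib,
        ← Finset.mul_sum, ← Finset.mul_sum, ← hSvdef, ← hB1def, div_mul_cancel₀ _ hSvpos.ne']
      ring
    have r2 : ∑ j, ((xy 0 β).1 j) ^ 2 * η j = c ^ 2 * Sv := by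
      have key : ∀ j : Fin n, ((xy 0 β).1 j) ^ 2 * η j = c ^ 2 * (ξ j ^ 2 * η j) := by
        intro j; rw [hx1' j]; ring
      rw [Finset.sum_congr rfl (fun j _ => key j), ← Finset.mul_sum, ← hSvdef]
    rw [r3, r2]
    ring
  have SUM5 : ∀ δ s1 s2 : ℝ,
      (∑ j, Complex.normSq ((δ * ξ j : ℝ) : ℂ))
        + (∑ j, Complex.normSq (((s1 : ℂ) + (s2 : ℂ) * Complex.I) * ((η j : ℝ) : ℂ)))
      = δ ^ 2 * X + (s1 ^ 2 + s2 ^ 2) * Y := by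
    intro δ s1 s2
    have e1 : ∀ j : Fin n, Complex.normSq ((δ * ξ j : ℝ) : ℂ) = δ ^ 2 * ξ j ^ 2 := by
      intro j; rw [Complex.normSq_ofReal]; ring
    have e2 : ∀ j : Fin n, Complex.normSq (((s1 : ℂ) + (s2 : ℂ) * Complex.I) * ((η j : ℝ) : ℂ))
        = (s1 ^ 2 + s2 ^ 2) * η j ^ 2 := by
      intro j
      rw [Complex.normSq_mul, Complex.normSq_ofReal]
      simp only [Complex.normSq_apply, Complex.add_re, Complex.add_im, Complex.mul_re,
        Complex.mul_im, Complex.ofReal_re, Complex.ofReal_im, Complex.I_re, Complex.I_im]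
      ring
    rw [Finset.sum_congr rfl (fun j _ => e1 j), Finset.sum_congr rfl (fun j _ => e2 j),
      ← Finset.mul_sum, ← Finset.mul_sum, ← hXdef, ← hYdef]
  intro δ s1 s2 w z ν β
  constructor
  · rintro ⟨hδ, hν, hβ, hwsum, hzsum, h1, h2, h3, h4, h5⟩
    have hw0 : w = 0 := by
      apply ker_vanish_complex hn hPirr hPess hPcol hξsum hPξ _ hwsum
      intro j
      have h := h2 j
      simpa using h
    have hz0 : z = 0 := by
      apply ker_vanish_complex hn hQirr hQess hQcol hηsum hQη _ hzsum
      intro j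
      have h := h4 j
      have hθC : (θ : ℂ) ≠ 0 := by exact_mod_cast hθ.ne'
      simp only [Complex.ofReal_zero, zero_mul, mul_zero, zero_div, sub_zero, add_zero] at h
      exact (mul_eq_zero.mp h).resolve_left hθC
    subst hw0 hz0
    simp only [Hh1] at h1
    rw [SUM1 β hβ δ s1 s2] at h1
    simp only [Hh3] at h3
    rw [SUM3 β hβ δ s1 s2] at h3
    obtain ⟨A1, A2⟩ := extract1 h1
    obtain ⟨A3, A4⟩ := extract3 h3
    have A5 : δ ^ 2 * X + (s1 ^ 2 + s2 ^ 2) * Y = X + Y := by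
      simp only [Pi.zero_apply, add_zero] at h5
      rw [SUM5 δ s1 s2] at h5
      linarith
    have hcS : 0 < c ^ 2 * Sv := by positivity
    have hδν : δ = ν * s2 := by linarith
    have hδpos : 0 < δ := by
      rcases eq_or_lt_of_le hδ with h | h
      · exfalso
        have hδ0 : δ = 0 := h.symm
        have hs2 : s2 = 0 := by
          have hz : c ^ 2 * Sv * s2 = 0 := by rw [hδ0] at A2; linarith
          exact (mul_eq_zero.mp hz).resolve_left hcS.ne'
        have hs1 : s1 = 0 := by
          have hz : c ^ 2 * Sv * s1 = 0 := by rw [hδ0] at A1; linarith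
          exact (mul_eq_zero.mp hz).resolve_left hcS.ne'
        rw [hδ0, hs1, hs2] at A5
        simp at A5
        nlinarith
      · exact h
    have hνpos : 0 < ν := by
      rcases eq_or_lt_of_le hν with h | h
      · exfalso; rw [← h] at hδν; simp at hδν; linarith
      · exact h
    have hs2δ : s2 = δ / ν := by rw [eq_div_iff hνpos.ne']; linarith [hδν]
    have hs2pos : 0 < s2 := hs2δ ▸ div_pos hδpos hνpos
    have hνsq : ν ^ 2 = c ^ 2 * Sv := by
      have key : (c ^ 2 * Sv - ν ^ 2) * s2 = 0 := by linear_combination A2 + ν * hδν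
      have h0 := (mul_eq_zero.mp key).resolve_right hs2pos.ne'
      linarith
    have hνν₀ : ν = ν₀ := by
      have key : (ν - ν₀) * (ν + ν₀) = 0 := by linear_combination hνsq - hν₀sq
      rcases mul_eq_zero.mp key with h | h
      · linarith
      · linarith
    have hs1δ : s1 = -δ := by
      have key : ν * s1 = ν * (-δ) := by
        linear_combination (-1 : ℝ) * A4 + ν * hδν + s2 * hνsq
      exact mul_left_cancel₀ hνpos.ne' key
    have hβval : β = β₀ := by
      have h2' : (β * B1 - 1 - c ^ 2 * Sv) * δ = 0 := by
        linear_combination A1 - c ^ 2 * Sv * hs1δ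
      have h3' : β * B1 = 1 + c ^ 2 * Sv := by
        have := (mul_eq_zero.mp h2').resolve_right hδpos.ne'
        linarith
      have h4' : β * B1 = β₀ * B1 := by rw [hβ₀B1, hν₀sq]; linarith
      exact mul_right_cancel₀ hB1pos.ne' h4'
    have hδval : δ = δ₀ := by
      have e1 : s1 ^ 2 + s2 ^ 2 = δ ^ 2 * (1 + 1 / ν₀ ^ 2) := by
        rw [hs1δ, hs2δ, hνν₀]
        field_simp
      have e2 : δ ^ 2 * (X + (1 + 1 / ν₀ ^ 2) * Y) = X + Y := by
        linear_combination A5 - Y * e1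
      have e3 : δ ^ 2 = δ₀ ^ 2 := by
        have key : (δ ^ 2 - δ₀ ^ 2) * (X + (1 + 1 / ν₀ ^ 2) * Y) = 0 := by
          linear_combination e2 - hδ₀sq
        have := (mul_eq_zero.mp key).resolve_right hDpos.ne'
        linarith
      have key : (δ - δ₀) * (δ + δ₀) = 0 := by linear_combination e3
      rcases mul_eq_zero.mp key with h | h
      · linarith
      · linarith
    exact ⟨hδval, by rw [hs1δ, hδval], by rw [hs2δ, hδval, hνν₀], rfl, rfl, hνν₀, hβval⟩
  · rintro ⟨rfl, rfl, rfl, rfl, rfl, rfl, rfl⟩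
    have hβIcc : β ∈ Set.Icc ε (1 / ε) := ⟨hβ₀mem.1.le, hβ₀mem.2.le⟩
    refine ⟨hδ₀pos.le, hν₀pos.le, hβIcc, by simp, by simp, ?_, ?_, ?_, ?_, ?_⟩
    · simp only [Hh1]
      rw [SUM1 β hβIcc]
      apply build1
      · linear_combination δ * hβ₀B1 + δ * hν₀sq
      · rw [← hν₀sq]
        field_simp
        ring
    · intro j
      simp
    · simp only [Hh3]
      rw [SUM3 β hβIcc]
      apply build3
      · have hone : ν * (δ / ν) = δ := by field_simp
        linear_combination (-δ) * hβ₀B1 + (-δ) * hν₀sq + hone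
      · rw [← hν₀sq]
        field_simp
        ring
    · intro j
      simp
    · simp only [Pi.zero_apply, add_zero]
      rw [SUM5]
      have hpt : (-δ) ^ 2 + (δ / ν) ^ 2 = δ ^ 2 * (1 + 1 / ν ^ 2) := by
        field_simp
      linear_combination hδ₀sq + Y * hpt
end

section
/- For each λ ∈ (0, λ₂], a tuple (φ, ψ, ν, β) with ν ≥ 0, β ∈ B and nonzero (φ, ψ) ∈ ℂ^{2n} satisfies (A_β(λ) − iλν I)(φ, ψ)ᵀ = 0 if and only if ν = ν_λ, β = β_λ, and there is a nonzero constant κ ∈ ℂ with φ = κ(δ_λξ + w_λ) and ψ = κ((s_{1λ} + is_{2λ})η + z_λ). -/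
open Finset Set

lemma mulVec_Amat {n : ℕ} (P Q : Matrix (Fin n) (Fin n) ℝ) (b : Fin n → ℝ)
    (θ lam β : ℝ) (x y : Fin n → ℝ) (φ ψ : Fin n → ℂ) :
    (Amat P Q b θ lam β x y).mulVec (Sum.elim φ ψ) =
    Sum.elim
      (fun j => (∑ k, (P j k : ℂ) * φ k) + (lam : ℂ) *
        (((2 * x j * y j - β * b j - 1 : ℝ) : ℂ) * φ j + (((x j) ^ 2 : ℝ) : ℂ) * ψ j))
      (fun j => (θ : ℂ) * (∑ k, (Q j k : ℂ) * ψ k) + (lam : ℂ) *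
        (((β * b j - 2 * x j * y j : ℝ) : ℂ) * φ j - (((x j) ^ 2 : ℝ) : ℂ) * ψ j)) := by
  funext i
  cases i with
  | inl j =>
    simp [Amat, Matrix.add_mulVec, Matrix.fromBlocks_mulVec, Matrix.smul_mulVec,
      Matrix.mulVec_diagonal, Matrix.mulVec, dotProduct, Matrix.map_apply,
      mul_add, mul_sub, smul_eq_mul, Matrix.diagonal_apply, mul_ite, ite_mul, mul_zero,
      zero_mul, Finset.sum_add_distrib, Finset.sum_ite_eq, Finset.sum_ite_eq']
    simp [add_mul, ite_mul, zero_mul, Finset.sum_add_distrib, Finset.sum_ite_eq]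
    ring
  | inr j =>
    simp [Amat, Matrix.add_mulVec, Matrix.fromBlocks_mulVec, Matrix.smul_mulVec,
      Matrix.mulVec_diagonal, Matrix.mulVec, dotProduct, Matrix.map_apply,
      mul_add, mul_sub, smul_eq_mul, Finset.mul_sum, Matrix.diagonal_apply, mul_ite,
      ite_mul, mul_zero, zero_mul, Finset.sum_add_distrib, Finset.sum_ite_eq,
      Finset.sum_ite_eq']
    simp [add_mul, ite_mul, zero_mul, Finset.sum_add_distrib, Finset.sum_ite_eq]
    simp only [mul_assoc]
    ring

/-- For `λ ∈ (0, λ₂]`, the problem `(A_β(λ) - iλν I)(φ,ψ)ᵀ = 0` with `ν ≥ 0`,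
`β ∈ B` and `(φ,ψ) ≠ 0` is solvable iff `ν = ν_λ`, `β = β_λ`, and `(φ,ψ)` is a
nonzero scalar multiple of `(δ_λξ + w_λ, (s_{1λ}+is_{2λ})η + z_λ)`. -/
theorem stmt_7 (n : ℕ) (hn : 2 ≤ n)
    (P Q : Matrix (Fin n) (Fin n) ℝ) (a b ξ η : Fin n → ℝ) (θ : ℝ)
    (ha : ∀ j, 0 < a j) (hb : ∀ j, 0 < b j) (hθ : 0 < θ)
    (hPirr : MatIrred P) (hQirr : MatIrred Q)
    (hPess : EssNonneg P) (hQess : EssNonneg Q)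
    (hPcol : ZeroColSums P) (hQcol : ZeroColSums Q)
    (hξpos : PosVec ξ) (hηpos : PosVec η)
    (hPξ : P.mulVec ξ = 0) (hQη : Q.mulVec η = 0)
    (hξsum : ∑ j, ξ j = 1) (hηsum : ∑ j, η j = 1)
    (ε : ℝ) (hε : ε ∈ Set.Ioo (0 : ℝ) 1)
    -- the globally defined equilibrium family on `[0, δε] × B`
    (δε : ℝ) (hδε : 0 < δε)
    (xy : ℝ → ℝ → (Fin n → ℝ) × (Fin n → ℝ))
    (hxyC1 : ContDiffOn ℝ 1 (fun p : ℝ × ℝ => xy p.1 p.2)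
      (Set.Icc 0 δε ×ˢ Set.Icc ε (1 / ε)))
    (hxy : ∀ lam ∈ Set.Ioc 0 δε, ∀ β ∈ Set.Icc ε (1 / ε),
      PosVec (xy lam β).1 ∧ PosVec (xy lam β).2 ∧
      IsEquilib P Q a b θ lam β (xy lam β).1 (xy lam β).2 ∧
      (∀ x y : Fin n → ℝ, PosVec x → PosVec y →
        IsEquilib P Q a b θ lam β x y → (x, y) = xy lam β))
    (hxy0 : ∀ β ∈ Set.Icc ε (1 / ε),
      xy 0 β = ((fun j => (∑ i, a i) * ξ j),
        (fun j => β * (∑ i, b i * ξ i) /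
          ((∑ i, a i) * (∑ i, (ξ i) ^ 2 * η i)) * η j)))
    -- the family from the Hopf-eigenvalue theorem on `[0, λ₂]`
    (lam₂ : ℝ) (hlam₂ : lam₂ ∈ Set.Ioo 0 δε)
    (δf s1f s2f νf βf : ℝ → ℝ) (wf zf : ℝ → Fin n → ℂ)
    (hδfC1 : ContDiffOn ℝ 1 δf (Set.Icc 0 lam₂)) (hs1fC1 : ContDiffOn ℝ 1 s1f (Set.Icc 0 lam₂))
    (hs2fC1 : ContDiffOn ℝ 1 s2f (Set.Icc 0 lam₂)) (hνfC1 : ContDiffOn ℝ 1 νf (Set.Icc 0 lam₂))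
    (hβfC1 : ContDiffOn ℝ 1 βf (Set.Icc 0 lam₂)) (hwfC1 : ContDiffOn ℝ 1 wf (Set.Icc 0 lam₂))
    (hzfC1 : ContDiffOn ℝ 1 zf (Set.Icc 0 lam₂))
    (hfam : ∀ lam ∈ Set.Icc 0 lam₂,
      (0 < δf lam ∧ 0 < νf lam ∧ βf lam ∈ Set.Icc ε (1 / ε) ∧
        (∑ j, wf lam j = 0) ∧ (∑ j, zf lam j = 0) ∧
        HZero P Q b ξ η θ (βf lam) lam (xy lam (βf lam)).1 (xy lam (βf lam)).2
          (δf lam) (s1f lam) (s2f lam) (wf lam) (zf lam) (νf lam)) ∧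
      (∀ (δ s1 s2 : ℝ) (w z : Fin n → ℂ) (ν β : ℝ),
        0 ≤ δ → 0 ≤ ν → β ∈ Set.Icc ε (1 / ε) →
        (∑ j, w j = 0) → (∑ j, z j = 0) →
        HZero P Q b ξ η θ β lam (xy lam β).1 (xy lam β).2 δ s1 s2 w z ν →
        δ = δf lam ∧ s1 = s1f lam ∧ s2 = s2f lam ∧ w = wf lam ∧ z = zf lam ∧
          ν = νf lam ∧ β = βf lam)) :
    ∀ lam ∈ Set.Ioc 0 lam₂, ∀ (φ ψ : Fin n → ℂ) (ν β : ℝ),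
      (0 ≤ ν ∧ β ∈ Set.Icc ε (1 / ε) ∧ Sum.elim φ ψ ≠ 0 ∧
        (Amat P Q b θ lam β (xy lam β).1 (xy lam β).2).mulVec (Sum.elim φ ψ)
          = (Complex.I * (lam : ℂ) * (ν : ℂ)) • Sum.elim φ ψ) ↔
      (ν = νf lam ∧ β = βf lam ∧ ∃ κ : ℂ, κ ≠ 0 ∧
        φ = (fun j => κ * (((δf lam * ξ j : ℝ) : ℂ) + wf lam j)) ∧
        ψ = (fun j => κ * (((s1f lam : ℂ) + (s2f lam : ℂ) * Complex.I) *
          ((η j : ℝ) : ℂ) + zf lam j))) := by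
  have hnpos : 0 < n := by omega
  have hFin : Nonempty (Fin n) := ⟨⟨0, hnpos⟩⟩
  intro lam hlam φ ψ ν β
  obtain ⟨hlam0, hlam2⟩ := hlam
  have hlamne : (lam : ℂ) ≠ 0 := by exact_mod_cast ne_of_gt hlam0
  obtain ⟨⟨hδf, hνf, hβfB, hwsum, hzsum, hHZ⟩, huniq⟩ := hfam lam ⟨hlam0.le, hlam2⟩
  have hPξC : ∀ j, (∑ k, (P j k : ℂ) * ((ξ k : ℝ) : ℂ)) = 0 := by
    intro j
    have h : ∑ k, P j k * ξ k = 0 := by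
      simpa [Matrix.mulVec, dotProduct] using congrFun hPξ j
    calc ∑ k, (P j k : ℂ) * ((ξ k : ℝ) : ℂ) = ((∑ k, P j k * ξ k : ℝ) : ℂ) := by
          push_cast; rfl
      _ = 0 := by rw [h]; simp
  have hQηC : ∀ j, (∑ k, (Q j k : ℂ) * ((η k : ℝ) : ℂ)) = 0 := by
    intro j
    have h : ∑ k, Q j k * η k = 0 := by
      simpa [Matrix.mulVec, dotProduct] using congrFun hQη j
    calc ∑ k, (Q j k : ℂ) * ((η k : ℝ) : ℂ) = ((∑ k, Q j k * η k : ℝ) : ℂ) := by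
          push_cast; rfl
      _ = 0 := by rw [h]; simp
  have hPcolC : ∀ k, (∑ j, (P j k : ℂ)) = 0 := by
    intro k
    calc ∑ j, (P j k : ℂ) = ((∑ j, P j k : ℝ) : ℂ) := by push_cast; rfl
      _ = 0 := by rw [hPcol k]; simp
  have hQcolC : ∀ k, (∑ j, (Q j k : ℂ)) = 0 := by
    intro k
    calc ∑ j, (Q j k : ℂ) = ((∑ j, Q j k : ℝ) : ℂ) := by push_cast; rfl
      _ = 0 := by rw [hQcol k]; simp
  have hξ2pos : (0 : ℝ) < ∑ j, ξ j ^ 2 :=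
    Finset.sum_pos (fun j _ => pow_pos (hξpos j) 2) Finset.univ_nonempty
  have hη2pos : (0 : ℝ) < ∑ j, η j ^ 2 :=
    Finset.sum_pos (fun j _ => pow_pos (hηpos j) 2) Finset.univ_nonempty
  constructor
  · rintro ⟨hν0, hβB, hvne, hEig⟩
    rw [mulVec_Amat] at hEig
    set X := (xy lam β).1 with hXdef
    set Y := (xy lam β).2 with hYdef
    have E1 : ∀ j, (∑ k, (P j k : ℂ) * φ k) + (lam : ℂ) *
        (((2 * X j * Y j - β * b j - 1 : ℝ) : ℂ) * φ j + (((X j) ^ 2 : ℝ) : ℂ) * ψ j)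
        = Complex.I * (lam : ℂ) * (ν : ℂ) * φ j := by
      intro j
      have := congrFun hEig (Sum.inl j)
      simpa [smul_eq_mul] using this
    have E2 : ∀ j, (θ : ℂ) * (∑ k, (Q j k : ℂ) * ψ k) + (lam : ℂ) *
        (((β * b j - 2 * X j * Y j : ℝ) : ℂ) * φ j - (((X j) ^ 2 : ℝ) : ℂ) * ψ j)
        = Complex.I * (lam : ℂ) * (ν : ℂ) * ψ j := by
      intro j
      have := congrFun hEig (Sum.inr j)
      simpa [smul_eq_mul] using this
    set σ := ∑ j, φ j with hσdef
    set τ := ∑ j, ψ j with hτdef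
    have hsum1 : ∑ j, (((2 * X j * Y j - β * b j - 1 : ℝ) : ℂ) * φ j
        + (((X j) ^ 2 : ℝ) : ℂ) * ψ j) = Complex.I * (ν : ℂ) * σ := by
      have h0 : ∑ j, ∑ k, (P j k : ℂ) * φ k = 0 := by
        rw [Finset.sum_comm]
        refine Finset.sum_eq_zero fun k _ => ?_
        rw [← Finset.sum_mul, hPcolC k, zero_mul]
      have hS := Finset.sum_congr rfl (fun j (_ : j ∈ Finset.univ) => E1 j)
      rw [Finset.sum_add_distrib, h0, zero_add, ← Finset.mul_sum] at hS
      apply mul_left_cancel₀ hlamne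
      rw [hS, ← Finset.mul_sum]
      ring
    have hsum3 : ∑ j, (((β * b j - 2 * X j * Y j : ℝ) : ℂ) * φ j
        - (((X j) ^ 2 : ℝ) : ℂ) * ψ j) = Complex.I * (ν : ℂ) * τ := by
      have h0 : ∑ j, (θ : ℂ) * ∑ k, (Q j k : ℂ) * ψ k = 0 := by
        rw [← Finset.mul_sum, Finset.sum_comm]
        refine mul_eq_zero_of_right _ (Finset.sum_eq_zero fun k _ => ?_)
        rw [← Finset.sum_mul, hQcolC k, zero_mul]
      have hS := Finset.sum_congr rfl (fun j (_ : j ∈ Finset.univ) => E2 j)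
      rw [Finset.sum_add_distrib, h0, zero_add, ← Finset.mul_sum] at hS
      apply mul_left_cancel₀ hlamne
      rw [hS, ← Finset.mul_sum]
      ring
    -- normalization constants
    set Nv := (∑ j, Complex.normSq (φ j)) + ∑ j, Complex.normSq (ψ j) with hNvdef
    have hNv : 0 < Nv := by
      have hA : (0 : ℝ) ≤ ∑ j, Complex.normSq (φ j) :=
        Finset.sum_nonneg fun j _ => Complex.normSq_nonneg _
      have hB : (0 : ℝ) ≤ ∑ j, Complex.normSq (ψ j) :=
        Finset.sum_nonneg fun j _ => Complex.normSq_nonneg _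
      have hex : ∃ i, Sum.elim φ ψ i ≠ 0 := by
        by_contra h
        push_neg at h
        exact hvne (funext h)
      obtain ⟨i, hi⟩ := hex
      cases i with
      | inl j =>
        have hpos : 0 < Complex.normSq (φ j) := Complex.normSq_pos.2 (by simpa using hi)
        have : 0 < ∑ j, Complex.normSq (φ j) :=
          Finset.sum_pos' (fun j _ => Complex.normSq_nonneg _)
            ⟨j, Finset.mem_univ j, hpos⟩
        exact add_pos_of_pos_of_nonneg this hB
      | inr j =>
        have hpos : 0 < Complex.normSq (ψ j) := Complex.normSq_pos.2 (by simpa using hi)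
        have : 0 < ∑ j, Complex.normSq (ψ j) :=
          Finset.sum_pos' (fun j _ => Complex.normSq_nonneg _)
            ⟨j, Finset.mem_univ j, hpos⟩
        exact add_pos_of_nonneg_of_pos hA this
    set Nt := (∑ j, ξ j ^ 2) + ∑ j, η j ^ 2 with hNtdef
    have hNt : 0 < Nt := add_pos hξ2pos hη2pos
    set t := Real.sqrt (Nt / Nv) with htdef
    have ht : 0 < t := Real.sqrt_pos.2 (div_pos hNt hNv)
    have ht2 : t ^ 2 * Nv = Nt := by
      rw [htdef, Real.sq_sqrt (div_pos hNt hNv).le]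
      field_simp
    set c : ℂ := if σ = 0 then (t : ℂ) else (t : ℂ) * ((‖σ‖ : ℝ) : ℂ) / σ
      with hcdef
    have htne : (t : ℂ) ≠ 0 := by exact_mod_cast ne_of_gt ht
    have hc0 : c ≠ 0 := by
      rw [hcdef]
      split_ifs with h
      · exact htne
      · exact div_ne_zero (mul_ne_zero htne (by
          exact_mod_cast (norm_ne_zero_iff.mpr h))) h
    set δ : ℝ := t * ‖σ‖ with hδdef
    have hδ0 : 0 ≤ δ := mul_nonneg ht.le (norm_nonneg _)
    have hcσ : c * σ = ((δ : ℝ) : ℂ) := by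
      rw [hcdef, hδdef]
      split_ifs with h
      · rw [h]
        simp
      · push_cast
        field_simp
    have hnormc : Complex.normSq c = t ^ 2 := by
      rw [← Complex.sq_norm]
      congr 1
      rw [hcdef]
      split_ifs with h
      · simp [Complex.norm_real, Real.norm_eq_abs, abs_of_pos ht]
      · rw [norm_div, norm_mul]
        simp [Complex.norm_real, Real.norm_eq_abs, abs_of_pos ht, norm_norm]
        field_simp [norm_ne_zero_iff.mpr h]
    set s1 : ℝ := (c * τ).re with hs1def
    set s2 : ℝ := (c * τ).im with hs2def
    have hs12 : (s1 : ℂ) + (s2 : ℂ) * Complex.I = c * τ := Complex.re_add_im _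
    set w : Fin n → ℂ := fun j => c * φ j - ((δ * ξ j : ℝ) : ℂ) with hwdef
    set z : Fin n → ℂ := fun j =>
      c * ψ j - ((s1 : ℂ) + (s2 : ℂ) * Complex.I) * ((η j : ℝ) : ℂ) with hzdef
    have hφc : ∀ j, ((δ * ξ j : ℝ) : ℂ) + w j = c * φ j := by
      intro j; rw [hwdef]; ring
    have hψc : ∀ j, ((s1 : ℂ) + (s2 : ℂ) * Complex.I) * ((η j : ℝ) : ℂ) + z j
        = c * ψ j := by
      intro j; rw [hzdef]; ring
    have hξsumC : ∑ j, ((δ * ξ j : ℝ) : ℂ) = ((δ : ℝ) : ℂ) := by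
      calc ∑ j, ((δ * ξ j : ℝ) : ℂ) = ((∑ j, δ * ξ j : ℝ) : ℂ) := by push_cast; rfl
        _ = ((δ * ∑ j, ξ j : ℝ) : ℂ) := by rw [← Finset.mul_sum]
        _ = ((δ : ℝ) : ℂ) := by rw [hξsum, mul_one]
    have hηsumC : ∑ j, ((η j : ℝ) : ℂ) = 1 := by
      calc ∑ j, ((η j : ℝ) : ℂ) = ((∑ j, η j : ℝ) : ℂ) := by push_cast; rfl
        _ = 1 := by rw [hηsum]; simp
    have hwsum0 : ∑ j, w j = 0 := by
      rw [hwdef]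
      rw [Finset.sum_sub_distrib, ← Finset.mul_sum, hξsumC, ← hσdef, hcσ, sub_self]
    have hzsum0 : ∑ j, z j = 0 := by
      rw [hzdef]
      rw [Finset.sum_sub_distrib, ← Finset.mul_sum, ← Finset.mul_sum, hηsumC, mul_one,
        ← hτdef, hs12, sub_self]
    have hHB1c : ∀ j, HB1 b ξ η β X Y δ s1 s2 w z j
        = c * (((2 * X j * Y j - β * b j - 1 : ℝ) : ℂ) * φ j
          + (((X j) ^ 2 : ℝ) : ℂ) * ψ j) := by
      intro j
      simp only [HB1]
      rw [hφc j, hψc j]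
      ring
    have hHB3c : ∀ j, HB3 b ξ η β X Y δ s1 s2 w z j
        = c * (((β * b j - 2 * X j * Y j : ℝ) : ℂ) * φ j
          - (((X j) ^ 2 : ℝ) : ℂ) * ψ j) := by
      intro j
      simp only [HB3]
      rw [hφc j, hψc j]
      ring
    have hh1 : Hh1 b ξ η β X Y δ s1 s2 w z ν = 0 := by
      simp only [Hh1]
      rw [Finset.sum_congr rfl (fun j _ => hHB1c j), ← Finset.mul_sum, hsum1]
      linear_combination Complex.I * (ν : ℂ) * hcσ
    have hh3 : Hh3 b ξ η β X Y δ s1 s2 w z ν = 0 := by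
      simp only [Hh3]
      rw [Finset.sum_congr rfl (fun j _ => hHB3c j), ← Finset.mul_sum, hsum3]
      linear_combination (-(Complex.I * (ν : ℂ))) * hs12
    have hh2 : ∀ j, (∑ k, (P j k : ℂ) * w k) + (lam : ℂ) * HB1 b ξ η β X Y δ s1 s2 w z j
        - Complex.I * (lam : ℂ) * (ν : ℂ) * (((δ * ξ j : ℝ) : ℂ) + w j)
        - (lam : ℂ) / (n : ℂ) * Hh1 b ξ η β X Y δ s1 s2 w z ν = 0 := by
      intro j
      rw [hh1, mul_zero, sub_zero, hHB1c j, hφc j]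
      have hsplitw : ∑ k, (P j k : ℂ) * w k
          = c * (∑ k, (P j k : ℂ) * φ k)
            - ((δ : ℝ) : ℂ) * (∑ k, (P j k : ℂ) * ((ξ k : ℝ) : ℂ)) := by
        calc ∑ k, (P j k : ℂ) * w k
            = ∑ k, (c * ((P j k : ℂ) * φ k)
              - ((δ : ℝ) : ℂ) * ((P j k : ℂ) * ((ξ k : ℝ) : ℂ))) := by
              refine Finset.sum_congr rfl fun k _ => ?_
              rw [hwdef]
              push_cast
              ring
          _ = _ := by
              rw [Finset.sum_sub_distrib, ← Finset.mul_sum, ← Finset.mul_sum]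
      rw [hsplitw, hPξC j]
      linear_combination c * E1 j
    have hh4 : ∀ j, (θ : ℂ) * (∑ k, (Q j k : ℂ) * z k)
        + (lam : ℂ) * HB3 b ξ η β X Y δ s1 s2 w z j
        - Complex.I * (lam : ℂ) * (ν : ℂ) *
            (((s1 : ℂ) + (s2 : ℂ) * Complex.I) * ((η j : ℝ) : ℂ) + z j)
        - (lam : ℂ) / (n : ℂ) * Hh3 b ξ η β X Y δ s1 s2 w z ν = 0 := by
      intro j
      rw [hh3, mul_zero, sub_zero, hHB3c j, hψc j]
      have hsplitz : ∑ k, (Q j k : ℂ) * z k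
          = c * (∑ k, (Q j k : ℂ) * ψ k)
            - ((s1 : ℂ) + (s2 : ℂ) * Complex.I)
              * (∑ k, (Q j k : ℂ) * ((η k : ℝ) : ℂ)) := by
        calc ∑ k, (Q j k : ℂ) * z k
            = ∑ k, (c * ((Q j k : ℂ) * ψ k)
              - ((s1 : ℂ) + (s2 : ℂ) * Complex.I)
                * ((Q j k : ℂ) * ((η k : ℝ) : ℂ))) := by
              refine Finset.sum_congr rfl fun k _ => ?_
              rw [hzdef]
              ring
          _ = _ := by
              rw [Finset.sum_sub_distrib, ← Finset.mul_sum, ← Finset.mul_sum]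
      rw [hsplitz, hQηC j]
      linear_combination c * E2 j
    have hh5 : (∑ j, Complex.normSq (((δ * ξ j : ℝ) : ℂ) + w j))
        + (∑ j, Complex.normSq (((s1 : ℂ) + (s2 : ℂ) * Complex.I) * ((η j : ℝ) : ℂ) + z j))
        - (∑ j, (ξ j) ^ 2) - (∑ j, (η j) ^ 2) = 0 := by
      have h1' : ∑ j, Complex.normSq (((δ * ξ j : ℝ) : ℂ) + w j)
          = t ^ 2 * ∑ j, Complex.normSq (φ j) := by
        rw [Finset.mul_sum]
        refine Finset.sum_congr rfl fun j _ => ?_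
        rw [hφc j, Complex.normSq_mul, hnormc]
      have h2' : ∑ j, Complex.normSq (((s1 : ℂ) + (s2 : ℂ) * Complex.I) * ((η j : ℝ) : ℂ) + z j)
          = t ^ 2 * ∑ j, Complex.normSq (ψ j) := by
        rw [Finset.mul_sum]
        refine Finset.sum_congr rfl fun j _ => ?_
        rw [hψc j, Complex.normSq_mul, hnormc]
      rw [h1', h2']
      have := ht2
      rw [hNvdef, hNtdef] at this
      linarith
    obtain ⟨hδe, hs1e, hs2e, hwe, hze, hνe, hβe⟩ :=
      huniq δ s1 s2 w z ν β hδ0 hν0 hβB hwsum0 hzsum0 ⟨hh1, hh2, hh3, hh4, hh5⟩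
    refine ⟨hνe, hβe, c⁻¹, inv_ne_zero hc0, ?_, ?_⟩
    · funext j
      rw [← hδe, ← hwe, hφc j]
      field_simp
    · funext j
      rw [← hs1e, ← hs2e, ← hze, hψc j]
      field_simp
  · rintro ⟨rfl, rfl, κ, hκ, rfl, rfl⟩
    obtain ⟨h1, h2, h3, h4, h5⟩ := hHZ
    refine ⟨hνf.le, hβfB, ?_, ?_⟩
    · intro h0
      have hφ0 : ∀ j, ((δf lam * ξ j : ℝ) : ℂ) + wf lam j = 0 := by
        intro j
        have := congrFun h0 (Sum.inl j)
        simp only [Sum.elim_inl, Pi.zero_apply] at this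
        exact (mul_eq_zero.1 this).resolve_left hκ
      have hψ0 : ∀ j, ((s1f lam : ℂ) + (s2f lam : ℂ) * Complex.I) * ((η j : ℝ) : ℂ)
          + zf lam j = 0 := by
        intro j
        have := congrFun h0 (Sum.inr j)
        simp only [Sum.elim_inr, Pi.zero_apply] at this
        exact (mul_eq_zero.1 this).resolve_left hκ
      rw [Finset.sum_eq_zero (fun j _ => by rw [hφ0 j]; simp),
        Finset.sum_eq_zero (fun j _ => by rw [hψ0 j]; simp)] at h5
      linarith
    · rw [mulVec_Amat]
      funext i
      cases i with
      | inl j =>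
        simp only [Sum.elim_inl, Pi.smul_apply, smul_eq_mul]
        have E := h2 j
        rw [h1, mul_zero, sub_zero] at E
        simp only [HB1] at E
        have hsplit : ∑ k, (P j k : ℂ) * (κ * (((δf lam * ξ k : ℝ) : ℂ) + wf lam k))
            = κ * ((δf lam : ℝ) : ℂ) * (∑ k, (P j k : ℂ) * ((ξ k : ℝ) : ℂ))
              + κ * (∑ k, (P j k : ℂ) * wf lam k) := by
          rw [Finset.mul_sum, Finset.mul_sum, ← Finset.sum_add_distrib]
          refine Finset.sum_congr rfl fun k _ => ?_
          push_cast
          ring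
        rw [hsplit, hPξC j]
        linear_combination κ * E
      | inr j =>
        simp only [Sum.elim_inr, Pi.smul_apply, smul_eq_mul]
        have E := h4 j
        rw [h3, mul_zero, sub_zero] at E
        simp only [HB3] at E
        have hsplit : ∑ k, (Q j k : ℂ) * (κ * (((s1f lam : ℂ) + (s2f lam : ℂ) * Complex.I)
              * ((η k : ℝ) : ℂ) + zf lam k))
            = κ * ((s1f lam : ℂ) + (s2f lam : ℂ) * Complex.I)
                * (∑ k, (Q j k : ℂ) * ((η k : ℝ) : ℂ))
              + κ * (∑ k, (Q j k : ℂ) * zf lam k) := by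
          rw [Finset.mul_sum, Finset.mul_sum, ← Finset.sum_add_distrib]
          refine Finset.sum_congr rfl fun k _ => ?_
          ring
        rw [hsplit, hQηC j]
        linear_combination κ * E
end
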